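/- arXiv:2005.03114 — 7 statements merged into one kernel-verified Lean document; each statement's English description precedes it below -/
import Mathlib

section
/- For all complex numbers z, w and every real number κ, the following algebraic identity holds: (κ|z|² + 1)²(κ|w|² + 1)² − (4κ Re(z·conj w) + (κ|z|² − 1)(κ|w|² − 1))² = 4κ |z − w|² (κ²|z|²|w|² + 2κ Re(z·conj w) + 1). -/
/-- The factorization identity used to simplify the potential of the curved
`n`-body problem in stereographic coordinates. -/
theorem curved_potential_factorization (z w : ℂ) (κ : ℝ) :
    (κ * ‖z‖ ^ 2 + 1) ^ 2 * (κ * ‖w‖ ^ 2 + 1) ^ 2 -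
      (4 * κ * (z * (starRingEnd ℂ) w).re +
        (κ * ‖z‖ ^ 2 - 1) * (κ * ‖w‖ ^ 2 - 1)) ^ 2 =
    4 * κ * ‖z - w‖ ^ 2 *
      (κ ^ 2 * ‖z‖ ^ 2 * ‖w‖ ^ 2 +
        2 * κ * (z * (starRingEnd ℂ) w).re + 1) := by
  simp only [Complex.sq_norm, Complex.normSq_apply, Complex.mul_re,
    Complex.conj_re, Complex.conj_im, Complex.sub_re, Complex.sub_im]
  ring
end

section
/- Let κ > 0 and let z, w be complex numbers with z ≠ w. Then (4κ Re(z·conj w) + (κ|w|² − 1)(κ|z|² − 1)) / sqrt( κ⁻¹(κ|w|² + 1)²(κ|z|² + 1)² − κ⁻¹(4κ Re(z·conj w) + (κ|w|² − 1)(κ|z|² − 1))² ) = (4κ Re(z·conj w) + (κ|w|² − 1)(κ|z|² − 1)) / (2|z − w| · sqrt(κ²|z|²|w|² + 2κ Re(z·conj w) + 1)), where sqrt denotes the real square root. In other words, the curved two-body potential of the sphere of curvature κ written with stereographic projection coincides with the unified simplified expression. -/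
open scoped BigOperators

/-- Unified curved pair potential `V(z, w; κ)`. -/
noncomputable def Vpot (z w : ℂ) (κ : ℝ) : ℝ :=
  (4 * κ * (z * (starRingEnd ℂ) w).re +
      (κ * ‖w‖ ^ 2 - 1) * (κ * ‖z‖ ^ 2 - 1)) /
    (2 * ‖z - w‖ *
      Real.sqrt (κ ^ 2 * ‖z‖ ^ 2 * ‖w‖ ^ 2 +
        2 * κ * (z * (starRingEnd ℂ) w).re + 1))


/-- For positive curvature `κ`, the curved two-body potential written with the
stereographic projection coincides with the unified simplified expression. -/
theorem sphere_potential_eq_unified (κ : ℝ) (hκ : 0 < κ) (z w : ℂ) (hzw : z ≠ w) :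
    (4 * κ * (z * (starRingEnd ℂ) w).re +
        (κ * ‖w‖ ^ 2 - 1) * (κ * ‖z‖ ^ 2 - 1)) /
      Real.sqrt (κ⁻¹ * (κ * ‖w‖ ^ 2 + 1) ^ 2 * (κ * ‖z‖ ^ 2 + 1) ^ 2 -
        κ⁻¹ * (4 * κ * (z * (starRingEnd ℂ) w).re +
          (κ * ‖w‖ ^ 2 - 1) * (κ * ‖z‖ ^ 2 - 1)) ^ 2) =
    (4 * κ * (z * (starRingEnd ℂ) w).re +
        (κ * ‖w‖ ^ 2 - 1) * (κ * ‖z‖ ^ 2 - 1)) /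
      (2 * ‖z - w‖ *
        Real.sqrt (κ ^ 2 * ‖z‖ ^ 2 * ‖w‖ ^ 2 +
          2 * κ * (z * (starRingEnd ℂ) w).re + 1)) := by
  have hd : ‖z - w‖ ^ 2 =
      ‖z‖ ^ 2 + ‖w‖ ^ 2 - 2 * (z * (starRingEnd ℂ) w).re := by
    rw [Complex.sq_norm, Complex.sq_norm, Complex.sq_norm, Complex.normSq_sub]
  have harg : κ⁻¹ * (κ * ‖w‖ ^ 2 + 1) ^ 2 * (κ * ‖z‖ ^ 2 + 1) ^ 2 -
      κ⁻¹ * (4 * κ * (z * (starRingEnd ℂ) w).re +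
        (κ * ‖w‖ ^ 2 - 1) * (κ * ‖z‖ ^ 2 - 1)) ^ 2 =
      (2 * ‖z - w‖) ^ 2 *
        (κ ^ 2 * ‖z‖ ^ 2 * ‖w‖ ^ 2 +
          2 * κ * (z * (starRingEnd ℂ) w).re + 1) := by
    have h4 : (2 * ‖z - w‖) ^ 2 = 4 * ‖z - w‖ ^ 2 := by ring
    rw [h4, hd]
    field_simp
    ring
  rw [harg, Real.sqrt_mul (sq_nonneg _), Real.sqrt_sq (by positivity)]
end

section
/- (Main theorem.) Let n ≥ 2 and m₁, …, mₙ > 0, and let a ∈ ℂⁿ be a non-degenerate central configuration: a has pairwise distinct components, ∇L(a; 0) = 0, and the kernel of the Hessian D²L(a; 0) (the second Fréchet derivative of L(·; 0) at a, a symmetric bilinear form on ℂⁿ ≅ ℝ^{2n}) is exactly the real line spanned by 𝒥a = (i·a₁, …, i·aₙ). Then there exist κ₀ > 0 and a continuous map u : (−κ₀, κ₀) → ℂⁿ with u(0) = a such that for every κ with |κ| < κ₀, u(κ) has pairwise distinct components and ∇L(u(κ); κ) = 0; that is, the relative equilibrium a of the planar Newtonian n-body problem continues to relative equilibria of the n-body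 problem in spaces of constant curvature κ, for both signs of κ. -/
open scoped BigOperators
open Filter

/-- Conformal factor `λ(z; κ)`. -/
noncomputable def lamConf (z : ℂ) (κ : ℝ) : ℝ := 4 / (1 + κ * ‖z‖ ^ 2) ^ 2

/-- Reduced Lagrangian of the curved `n`-body problem in rotating coordinates. -/
noncomputable def Lag (n : ℕ) (m : Fin n → ℝ) (κ : ℝ) (u : Fin n → ℂ) : ℝ :=
  (1 / 2) * ∑ j, m j * lamConf (u j) κ * ‖u j‖ ^ 2 +
    ∑ j : Fin n, ∑ k ∈ Finset.Ioi j, m j * m k * Vpot (u j) (u k) κ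

/-- Gradient of the reduced Lagrangian with respect to the real inner product
`Re⟪v, w⟫ = ∑ j, Re (v j * conj (w j))` on `ℂⁿ ≅ ℝ^{2n}`: the `j`-th component
is `∂L/∂xⱼ + i ∂L/∂yⱼ`. -/
noncomputable def gradL (n : ℕ) (m : Fin n → ℝ) (κ : ℝ) (u : Fin n → ℂ) : Fin n → ℂ :=
  fun j =>
    ((fderiv ℝ (fun z : ℂ => Lag n m κ (Function.update u j z)) (u j)) 1 : ℝ) +
      ((fderiv ℝ (fun z : ℂ => Lag n m κ (Function.update u j z)) (u j)) Complex.I : ℝ) *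
        Complex.I


section smooth

lemma contDiff_normSq : ContDiff ℝ 2 Complex.normSq := by
  have h : (Complex.normSq : ℂ → ℝ) = fun z => z.re * z.re + z.im * z.im :=
    funext fun z => Complex.normSq_apply z
  rw [h]
  exact (Complex.reCLM.contDiff.mul Complex.reCLM.contDiff).add
    (Complex.imCLM.contDiff.mul Complex.imCLM.contDiff)

lemma contDiff_conj : ContDiff ℝ 2 (fun z : ℂ => (starRingEnd ℂ) z) := by
  have : (fun z : ℂ => (starRingEnd ℂ) z) = ⇑Complex.conjCLE := by
    funext z; simp
  rw [this]; exact Complex.conjCLE.contDiff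

variable {E : Type*} [NormedAddCommGroup E] [NormedSpace ℝ E]

lemma ContDiffAt.normSq' {f : E → ℂ} {x : E} (hf : ContDiffAt ℝ 2 f x) :
    ContDiffAt ℝ 2 (fun y => ‖f y‖ ^ 2) x := by
  have h : (fun y => ‖f y‖ ^ 2) = fun y => Complex.normSq (f y) := by
    funext y; exact Complex.sq_norm _
  rw [h]
  exact contDiff_normSq.comp_contDiffAt x hf

lemma ContDiffAt.mulconjre {f g : E → ℂ} {x : E} (hf : ContDiffAt ℝ 2 f x)
    (hg : ContDiffAt ℝ 2 g x) :
    ContDiffAt ℝ 2 (fun y => (f y * (starRingEnd ℂ) (g y)).re) x :=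
  Complex.reCLM.contDiff.comp_contDiffAt x
    (hf.mul (contDiff_conj.comp_contDiffAt x hg))

lemma contDiffAt_Vpot {f g : E → ℂ} {h : E → ℝ} {x : E}
    (hf : ContDiffAt ℝ 2 f x) (hg : ContDiffAt ℝ 2 g x) (hh : ContDiffAt ℝ 2 h x)
    (hne : f x ≠ g x)
    (hpos : 0 < h x ^ 2 * ‖f x‖ ^ 2 * ‖g x‖ ^ 2 +
      2 * h x * (f x * (starRingEnd ℂ) (g x)).re + 1) :
    ContDiffAt ℝ 2 (fun y => Vpot (f y) (g y) (h y)) x := by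
  have habs : ContDiffAt ℝ 2 (fun y => ‖f y - g y‖) x := by
    have h1 : (fun y => ‖f y - g y‖) =
        fun y => Real.sqrt (Complex.normSq (f y - g y)) := by
      funext y; exact Complex.norm_def _
    rw [h1]
    have hsub : ContDiffAt ℝ 2 (fun y => f y - g y) x := hf.sub hg
    have hns : ContDiffAt ℝ 2 (fun y => Complex.normSq (f y - g y)) x :=
      contDiff_normSq.comp_contDiffAt x hsub
    have hne0 : Complex.normSq (f x - g x) ≠ 0 := by
      simpa [Complex.normSq_eq_zero, sub_eq_zero] using hne
    exact (Real.contDiffAt_sqrt hne0).comp x hns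
  have harg : ContDiffAt ℝ 2 (fun y => h y ^ 2 * ‖f y‖ ^ 2 *
      ‖g y‖ ^ 2 + 2 * h y * (f y * (starRingEnd ℂ) (g y)).re + 1) x :=
    (((hh.pow 2).mul hf.normSq').mul hg.normSq').add
      (((contDiffAt_const.mul hh).mul (hf.mulconjre hg))) |>.add contDiffAt_const
  have hsqrt : ContDiffAt ℝ 2 (fun y => Real.sqrt (h y ^ 2 * ‖f y‖ ^ 2 *
      ‖g y‖ ^ 2 + 2 * h y * (f y * (starRingEnd ℂ) (g y)).re + 1)) x :=
    (Real.contDiffAt_sqrt hpos.ne').comp x harg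
  have hnum : ContDiffAt ℝ 2 (fun y => 4 * h y * (f y * (starRingEnd ℂ) (g y)).re +
      (h y * ‖g y‖ ^ 2 - 1) * (h y * ‖f y‖ ^ 2 - 1)) x :=
    ((contDiffAt_const.mul hh).mul (hf.mulconjre hg)).add
      (((hh.mul hg.normSq').sub contDiffAt_const).mul
        ((hh.mul hf.normSq').sub contDiffAt_const))
  have hden : ContDiffAt ℝ 2 (fun y => 2 * ‖f y - g y‖ *
      Real.sqrt (h y ^ 2 * ‖f y‖ ^ 2 * ‖g y‖ ^ 2 +
        2 * h y * (f y * (starRingEnd ℂ) (g y)).re + 1)) x :=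
    ((contDiffAt_const.mul habs).mul hsqrt)
  have hdne : 2 * ‖f x - g x‖ *
      Real.sqrt (h x ^ 2 * ‖f x‖ ^ 2 * ‖g x‖ ^ 2 +
        2 * h x * (f x * (starRingEnd ℂ) (g x)).re + 1) ≠ 0 := by
    have h1 : ‖f x - g x‖ ≠ 0 := by
      simpa [sub_eq_zero] using hne
    have h2 : Real.sqrt (h x ^ 2 * ‖f x‖ ^ 2 * ‖g x‖ ^ 2 +
        2 * h x * (f x * (starRingEnd ℂ) (g x)).re + 1) ≠ 0 :=
      (Real.sqrt_pos.2 hpos).ne'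
    positivity
  exact hnum.div hden hdne

lemma contDiffAt_lamConf {f : E → ℂ} {h : E → ℝ} {x : E}
    (hf : ContDiffAt ℝ 2 f x) (hh : ContDiffAt ℝ 2 h x)
    (hne : 1 + h x * ‖f x‖ ^ 2 ≠ 0) :
    ContDiffAt ℝ 2 (fun y => lamConf (f y) (h y)) x := by
  unfold lamConf
  exact contDiffAt_const.div
    ((contDiffAt_const.add (hh.mul hf.normSq')).pow 2) (pow_ne_zero 2 hne)

end smooth

/-- The "good" set where the Lagrangian is smooth. -/
def Good (n : ℕ) (p : ℝ × (Fin n → ℂ)) : Prop :=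
  (∀ j k : Fin n, j ≠ k → p.2 j ≠ p.2 k) ∧
  (∀ j, 1 + p.1 * ‖p.2 j‖ ^ 2 ≠ 0) ∧
  (∀ j k : Fin n, 0 < p.1 ^ 2 * ‖p.2 j‖ ^ 2 * ‖p.2 k‖ ^ 2 +
    2 * p.1 * (p.2 j * (starRingEnd ℂ) (p.2 k)).re + 1)

lemma lag_smooth {n : ℕ} (m : Fin n → ℝ) {p : ℝ × (Fin n → ℂ)} (hp : Good n p) :
    ContDiffAt ℝ 2 (fun q : ℝ × (Fin n → ℂ) => Lag n m q.1 q.2) p := by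
  obtain ⟨h1, h2, h3⟩ := hp
  have cF : ContDiffAt ℝ 2 (fun q : ℝ × (Fin n → ℂ) => q.1) p := contDiffAt_fst
  have cU : ∀ j : Fin n, ContDiffAt ℝ 2 (fun q : ℝ × (Fin n → ℂ) => q.2 j) p :=
    fun j => (((ContinuousLinearMap.proj j : (Fin n → ℂ) →L[ℝ] ℂ).contDiff.comp contDiff_snd).contDiffAt : ContDiffAt ℝ 2 (fun q : ℝ × (Fin n → ℂ) => (ContinuousLinearMap.proj j : (Fin n → ℂ) →L[ℝ] ℂ) q.2) p)
  unfold Lag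
  apply ContDiffAt.add
  · apply ContDiffAt.mul contDiffAt_const
    apply ContDiffAt.sum
    intro j _
    exact (contDiffAt_const.mul (contDiffAt_lamConf (cU j) cF (h2 j))).mul (cU j).normSq'
  · apply ContDiffAt.sum
    intro j _
    apply ContDiffAt.sum
    intro k hk
    refine contDiffAt_const.mul (contDiffAt_Vpot (cU j) (cU k) cF ?_ (h3 j k))
    exact h1 j k (Finset.mem_Ioi.mp hk).ne'.symm

/-- Good holds at `(0, a)` for injective `a`. -/
lemma good_zero {n : ℕ} {a : Fin n → ℂ} (ha : Function.Injective a) : Good n (0, a) := by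
  refine ⟨fun j k hjk => fun h => hjk (ha h), ?_, ?_⟩ <;> intros <;> simp

/-- Good is an open condition. -/
lemma good_eventually {n : ℕ} {p : ℝ × (Fin n → ℂ)} (hp : Good n p) :
    ∀ᶠ q in nhds p, Good n q := by
  obtain ⟨h1, h2, h3⟩ := hp
  have cF : Continuous (fun q : ℝ × (Fin n → ℂ) => q.1) := continuous_fst
  have cU : ∀ j : Fin n, Continuous (fun q : ℝ × (Fin n → ℂ) => q.2 j) :=
    fun j => (continuous_apply j).comp continuous_snd
  have e1 : ∀ᶠ q in nhds p, ∀ j k : Fin n, j ≠ k → q.2 j ≠ q.2 k := by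
    rw [Filter.eventually_all]; intro j
    rw [Filter.eventually_all]; intro k
    by_cases hjk : j = k
    · simp [hjk]
    · have : ∀ᶠ q in nhds p, q.2 j ≠ q.2 k :=
        ((cU j).sub (cU k)).continuousAt.eventually_ne
          (sub_ne_zero.2 (h1 j k hjk)) |>.mono (fun q hq => sub_ne_zero.mp hq)
      exact this.mono fun q hq _ => hq
  have e2 : ∀ᶠ q in nhds p, ∀ j, 1 + q.1 * ‖q.2 j‖ ^ 2 ≠ 0 := by
    rw [Filter.eventually_all]; intro j
    exact (continuous_const.add (cF.mul
      (((continuous_norm.comp (cU j)).pow 2)))).continuousAt.eventually_ne (h2 j)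
  have e3 : ∀ᶠ q in nhds p, ∀ j k : Fin n,
      0 < q.1 ^ 2 * ‖q.2 j‖ ^ 2 * ‖q.2 k‖ ^ 2 +
        2 * q.1 * (q.2 j * (starRingEnd ℂ) (q.2 k)).re + 1 := by
    rw [Filter.eventually_all]; intro j
    rw [Filter.eventually_all]; intro k
    have hc : Continuous (fun q : ℝ × (Fin n → ℂ) =>
        q.1 ^ 2 * ‖q.2 j‖ ^ 2 * ‖q.2 k‖ ^ 2 +
          2 * q.1 * (q.2 j * (starRingEnd ℂ) (q.2 k)).re + 1) := by
      apply Continuous.add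
      apply Continuous.add
      · exact (((cF.pow 2).mul ((continuous_norm.comp (cU j)).pow 2)).mul
          ((continuous_norm.comp (cU k)).pow 2))
      · exact (continuous_const.mul cF).mul
          (Complex.continuous_re.comp ((cU j).mul
            (Complex.continuous_conj.comp (cU k))))
      · exact continuous_const
    exact hc.continuousAt.eventually (eventually_gt_nhds (h3 j k))
  exact (e1.and (e2.and e3)).mono fun q hq => ⟨hq.1, hq.2.1, hq.2.2⟩

/-- coordinate insertion as a continuous linear map -/
noncomputable def sing (n : ℕ) (j : Fin n) : ℂ →L[ℝ] (Fin n → ℂ) :=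
  ContinuousLinearMap.pi (fun i => if i = j then ContinuousLinearMap.id ℝ ℂ else 0)

lemma sing_apply {n : ℕ} (j : Fin n) (z : ℂ) : sing n j z = Pi.single j z := by
  funext i
  rw [Pi.single_apply]
  simp only [sing, ContinuousLinearMap.pi_apply]
  split <;> simp_all

/-- real inner product on `ℂⁿ` -/
noncomputable def ipR {n : ℕ} (v w : Fin n → ℂ) : ℝ :=
  ∑ j, (v j * (starRingEnd ℂ) (w j)).re

lemma single_decomp {n : ℕ} (j : Fin n) (z : ℂ) :
    (Pi.single j z : Fin n → ℂ) =
      z.re • (Pi.single j (1:ℂ) : Fin n → ℂ) + z.im • (Pi.single j Complex.I : Fin n → ℂ) := by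
  funext i
  rcases eq_or_ne i j with h | h
  · subst h
    simp [Complex.real_smul, Complex.re_add_im]
  · simp [Pi.single_apply, h]

lemma clm_decomp {n : ℕ} (B : (Fin n → ℂ) →L[ℝ] ℝ) (v : Fin n → ℂ) :
    B v = ∑ j, ((v j).re * B (Pi.single j 1) + (v j).im * B (Pi.single j Complex.I)) := by
  have hv : v = ∑ j, Pi.single j (v j) := (Finset.univ_sum_single v).symm
  conv_lhs => rw [hv]
  rw [map_sum]
  apply Finset.sum_congr rfl
  intro j _
  rw [single_decomp j (v j), map_add, map_smul, map_smul, smul_eq_mul, smul_eq_mul]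

lemma ip_vec {n : ℕ} (B : (Fin n → ℂ) →L[ℝ] ℝ) (w : Fin n → ℂ) :
    ipR (fun j => ((B (Pi.single j 1) : ℝ) : ℂ) +
      ((B (Pi.single j Complex.I) : ℝ) : ℂ) * Complex.I) w = B w := by
  rw [clm_decomp B w]
  unfold ipR
  apply Finset.sum_congr rfl
  intro j _
  simp [Complex.mul_re, Complex.add_re, Complex.add_im, Complex.mul_im,
    Complex.conj_re, Complex.conj_im, Complex.I_re, Complex.I_im,
    Complex.ofReal_re, Complex.ofReal_im]
  ring

/-- evaluation part of the gradient as a continuous linear map -/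
noncomputable def Tmap (n : ℕ) : ((ℝ × (Fin n → ℂ)) →L[ℝ] ℝ) →L[ℝ] (Fin n → ℂ) :=
  ContinuousLinearMap.pi fun j =>
    Complex.ofRealCLM.comp
      (ContinuousLinearMap.apply ℝ ℝ (((0:ℝ), Pi.single j (1:ℂ)))) +
    (((ContinuousLinearMap.id ℝ ℝ).smulRight (Complex.I)).comp
       (ContinuousLinearMap.apply ℝ ℝ (((0:ℝ), Pi.single j Complex.I))))

lemma Tmap_apply {n : ℕ} (B : (ℝ × (Fin n → ℂ)) →L[ℝ] ℝ) (j : Fin n) :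
    Tmap n B j = ((B (0, Pi.single j 1) : ℝ) : ℂ) +
      ((B (0, Pi.single j Complex.I) : ℝ) : ℂ) * Complex.I := by
  simp [Tmap, ContinuousLinearMap.smulRight_apply, Complex.real_smul]

noncomputable def mulConstCLM (c : ℂ) : ℂ →L[ℝ] ℂ :=
  LinearMap.toContinuousLinearMap (LinearMap.mulRight ℝ c)

noncomputable def ipCLM (n : ℕ) (b : Fin n → ℂ) : (ℝ × (Fin n → ℂ)) →L[ℝ] ℝ :=
  ∑ j, Complex.reCLM.comp ((mulConstCLM ((starRingEnd ℂ) (b j))).comp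
    ((ContinuousLinearMap.proj j).comp (ContinuousLinearMap.snd ℝ ℝ (Fin n → ℂ))))

lemma ipCLM_apply {n : ℕ} (b : Fin n → ℂ) (p : ℝ × (Fin n → ℂ)) :
    ipCLM n b p = ipR p.2 b := by
  simp [ipCLM, ipR, mulConstCLM, ContinuousLinearMap.sum_apply]

set_option maxHeartbeats 1000000 in
lemma gradL_eq {n : ℕ} (m : Fin n → ℝ) {p : ℝ × (Fin n → ℂ)} (hp : Good n p) :
    gradL n m p.1 p.2 =
      Tmap n (fderiv ℝ (fun q : ℝ × (Fin n → ℂ) => Lag n m q.1 q.2) p) := by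
  funext j
  set D := fderiv ℝ (fun q : ℝ × (Fin n → ℂ) => Lag n m q.1 q.2) p with hD
  have hL : HasFDerivAt (fun q : ℝ × (Fin n → ℂ) => Lag n m q.1 q.2) D p :=
    ((lag_smooth m hp).differentiableAt (by norm_num)).hasFDerivAt
  have h1 : HasFDerivAt (fun z : ℂ => Function.update p.2 j z) (sing n j) (p.2 j) := by
    have heq : (fun z : ℂ => Function.update p.2 j z) =
        fun z => (p.2 - sing n j (p.2 j)) + sing n j z := by
      funext z i
      rcases eq_or_ne i j with h | h
      · subst h; simp [sing_apply]
      · simp [sing_apply, Function.update_apply, h, Pi.single_apply]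
    rw [heq]
    have h2 := (hasFDerivAt_const (p.2 - sing n j (p.2 j)) (p.2 j)).add ((sing n j).hasFDerivAt)
    rw [zero_add] at h2
    exact h2
  have hinner : HasFDerivAt (fun z : ℂ => ((p.1 : ℝ), Function.update p.2 j z))
      (ContinuousLinearMap.prod 0 (sing n j)) (p.2 j) :=
    HasFDerivAt.prodMk (hasFDerivAt_const p.1 (p.2 j)) h1
  have hfx : ((p.1 : ℝ), Function.update p.2 j (p.2 j)) = p := by
    rw [Function.update_eq_self]
  have hL' : HasFDerivAt (fun q : ℝ × (Fin n → ℂ) => Lag n m q.1 q.2) D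
      ((fun z : ℂ => ((p.1 : ℝ), Function.update p.2 j z)) (p.2 j)) := by
    show HasFDerivAt _ D ((p.1 : ℝ), Function.update p.2 j (p.2 j))
    rw [hfx]; exact hL
  have hcomp : HasFDerivAt ((fun q : ℝ × (Fin n → ℂ) => Lag n m q.1 q.2) ∘
      (fun z : ℂ => ((p.1 : ℝ), Function.update p.2 j z)))
      (D.comp (ContinuousLinearMap.prod 0 (sing n j))) (p.2 j) :=
    hL'.comp (p.2 j) hinner
  have hfd : fderiv ℝ (fun z : ℂ => Lag n m p.1 (Function.update p.2 j z)) (p.2 j) =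
      D.comp (ContinuousLinearMap.prod 0 (sing n j)) := by
    have heq2 : (fun z : ℂ => Lag n m p.1 (Function.update p.2 j z)) =
        ((fun q : ℝ × (Fin n → ℂ) => Lag n m q.1 q.2) ∘
          (fun z : ℂ => ((p.1 : ℝ), Function.update p.2 j z))) := rfl
    rw [heq2, hcomp.fderiv]
  unfold gradL
  rw [hfd, Tmap_apply]
  simp [sing_apply]

lemma lag_rot {n : ℕ} (m : Fin n → ℝ) (κ θ : ℝ) (u : Fin n → ℂ) :
    Lag n m κ (fun j => Complex.exp (θ * Complex.I) * u j) = Lag n m κ u := by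
  set e := Complex.exp (θ * Complex.I) with he
  have habs : ‖e‖ = 1 := by
    rw [he, Complex.norm_exp]; simp
  have hconj : e * (starRingEnd ℂ) e = 1 := by
    rw [Complex.mul_conj]
    norm_cast
    rw [Complex.normSq_eq_norm_sq, habs]; norm_num
  have habs2 : ∀ z : ℂ, ‖e * z‖ = ‖z‖ := by
    intro z; rw [norm_mul, habs, one_mul]
  have hre : ∀ z w : ℂ, (e * z * (starRingEnd ℂ) (e * w)).re = (z * (starRingEnd ℂ) w).re := by
    intro z w
    rw [map_mul, show e * z * ((starRingEnd ℂ) e * (starRingEnd ℂ) w) =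
      (e * (starRingEnd ℂ) e) * (z * (starRingEnd ℂ) w) from by ring, hconj, one_mul]
  unfold Lag lamConf Vpot
  simp only [← mul_sub, habs2, hre]

lemma rot_deriv {n : ℕ} (m : Fin n → ℝ) {p : ℝ × (Fin n → ℂ)} (hp : Good n p) :
    (fderiv ℝ (fun q : ℝ × (Fin n → ℂ) => Lag n m q.1 q.2) p)
      (0, fun j => Complex.I * p.2 j) = 0 := by
  set D := fderiv ℝ (fun q : ℝ × (Fin n → ℂ) => Lag n m q.1 q.2) p with hD
  have hL : HasFDerivAt (fun q : ℝ × (Fin n → ℂ) => Lag n m q.1 q.2) D p :=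
    ((lag_smooth m hp).differentiableAt (by norm_num)).hasFDerivAt
  have hc : HasDerivAt (fun θ : ℝ => ((p.1 : ℝ), fun j => Complex.exp (θ * Complex.I) * p.2 j))
      (((0:ℝ), fun j => Complex.I * p.2 j)) 0 := by
    apply HasDerivAt.prodMk (hasDerivAt_const 0 p.1)
    rw [hasDerivAt_pi]
    intro j
    have h1 : HasDerivAt (fun θ : ℝ => (θ : ℂ) * Complex.I) Complex.I 0 := by
      simpa using (Complex.ofRealCLM.hasDerivAt (x := (0:ℝ))).mul_const Complex.I
    have h := h1.cexp
    simp only [Complex.ofReal_zero, zero_mul, Complex.exp_zero, one_mul] at h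
    simpa using h.mul_const (p.2 j)
  have hcv : (fun θ : ℝ => ((p.1:ℝ), fun j => Complex.exp (θ * Complex.I) * p.2 j)) 0 = p := by
    refine Prod.ext rfl (funext fun j => ?_)
    simp
  have hL2 : HasFDerivAt (fun q : ℝ × (Fin n → ℂ) => Lag n m q.1 q.2) D
      ((fun θ : ℝ => ((p.1:ℝ), fun j => Complex.exp (θ * Complex.I) * p.2 j)) 0) := by
    rw [hcv]; exact hL
  have hcomp := hL2.comp_hasDerivAt 0 hc
  have hconst : ((fun q : ℝ × (Fin n → ℂ) => Lag n m q.1 q.2) ∘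
      (fun θ : ℝ => ((p.1:ℝ), fun j => Complex.exp (θ * Complex.I) * p.2 j))) =
      fun _ : ℝ => Lag n m p.1 p.2 :=
    funext fun θ => lag_rot m p.1 θ p.2
  rw [hconst] at hcomp
  exact hcomp.unique (hasDerivAt_const 0 _)

lemma ipR_add {n : ℕ} (x y w : Fin n → ℂ) : ipR (x + y) w = ipR x w + ipR y w := by
  unfold ipR
  rw [← Finset.sum_add_distrib]
  apply Finset.sum_congr rfl
  intro j _
  simp [add_mul, Complex.add_re]

lemma ipR_smul {n : ℕ} (c : ℝ) (x w : Fin n → ℂ) : ipR (c • x) w = c * ipR x w := by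
  unfold ipR
  rw [Finset.mul_sum]
  apply Finset.sum_congr rfl
  intro j _
  simp [Complex.real_smul, mul_assoc, Complex.re_ofReal_mul]

lemma ipR_normSq {n : ℕ} (v : Fin n → ℂ) : ipR v v = ∑ j, Complex.normSq (v j) := by
  unfold ipR
  apply Finset.sum_congr rfl
  intro j _
  rw [Complex.mul_conj]
  exact Complex.ofReal_re _

lemma ipR_J_self {n : ℕ} (v : Fin n → ℂ) :
    ipR v (fun j => Complex.I * v j) = 0 := by
  unfold ipR
  apply Finset.sum_eq_zero
  intro j _
  simp [Complex.mul_re, Complex.mul_im, Complex.conj_re, Complex.conj_im]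
  ring

lemma ipR_JJ {n : ℕ} (x y : Fin n → ℂ) :
    ipR (fun j => Complex.I * x j) (fun j => Complex.I * y j) = ipR x y := by
  unfold ipR
  apply Finset.sum_congr rfl
  intro j _
  simp [Complex.mul_re, Complex.mul_im, Complex.conj_re, Complex.conj_im]


set_option maxHeartbeats 2000000 in
/-- **Main theorem.** Every non-degenerate central configuration of the planar
Newtonian `n`-body problem can be continued to relative equilibria of the
`n`-body problem in spaces of constant curvature `κ`, for `|κ|` small, of both
signs. -/
theorem continuation_of_relative_equilibria
    (n : ℕ) (hn : 2 ≤ n) (m : Fin n → ℝ) (hm : ∀ j, 0 < m j)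
    (a : Fin n → ℂ) (ha : Function.Injective a)
    (hcrit : gradL n m 0 a = 0)
    (hnondeg : ∀ v : Fin n → ℂ,
      (fderiv ℝ (fun u : Fin n → ℂ => fderiv ℝ (fun w : Fin n → ℂ => Lag n m 0 w) u) a) v = 0 ↔
        ∃ t : ℝ, v = t • fun j => Complex.I * a j) :
    ∃ κ₀ > (0 : ℝ), ∃ u : ℝ → Fin n → ℂ,
      ContinuousOn u (Set.Ioo (-κ₀) κ₀) ∧ u 0 = a ∧
        ∀ κ : ℝ, |κ| < κ₀ → Function.Injective (u κ) ∧ gradL n m κ (u κ) = 0 := by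
  classical
  set Ja : Fin n → ℂ := (fun j => Complex.I * a j) with hJa
  have hG0 : Good n (0, a) := good_zero ha
  -- positivity facts
  have hane : ∃ j, a j ≠ 0 := by
    by_contra h
    push_neg at h
    have h01 : (⟨0, by omega⟩ : Fin n) ≠ (⟨1, by omega⟩ : Fin n) := by
      simp [Fin.ext_iff]
    exact h01 (ha (by rw [h, h]))
  have hsumpos : (0:ℝ) < ∑ j, Complex.normSq (a j) := by
    obtain ⟨j0, hj0⟩ := hane
    exact Finset.sum_pos' (fun j _ => Complex.normSq_nonneg _)
      ⟨j0, Finset.mem_univ _, Complex.normSq_pos.2 hj0⟩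
  have hipJJ : 0 < ipR Ja Ja := by
    rw [hJa, ipR_JJ, ipR_normSq]; exact hsumpos
  have hipaa : 0 < ipR a a := by rw [ipR_normSq]; exact hsumpos
  -- abbreviations
  set LJ : ℝ × (Fin n → ℂ) → ℝ := (fun q : ℝ × (Fin n → ℂ) => Lag n m q.1 q.2) with hLJ
  set Ψ : ℝ × (Fin n → ℂ) → ((ℝ × (Fin n → ℂ)) →L[ℝ] ℝ) := fun p => fderiv ℝ LJ p with hΨdef
  set ℓ : (ℝ × (Fin n → ℂ)) →L[ℝ] (Fin n → ℂ) := (ipCLM n Ja).smulRight Ja with hℓ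
  have hℓ_apply : ∀ p : ℝ × (Fin n → ℂ), ℓ p = ipR p.2 Ja • Ja := by
    intro p
    rw [hℓ, ContinuousLinearMap.smulRight_apply, ipCLM_apply]
  set Fm : ℝ × (Fin n → ℂ) → (Fin n → ℂ) := fun p => Tmap n (Ψ p) + ℓ p with hFm
  set pre : ((ℝ × (Fin n → ℂ)) →L[ℝ] ℝ) →L[ℝ] ((Fin n → ℂ) →L[ℝ] ℝ) :=
    (ContinuousLinearMap.compL ℝ (Fin n → ℂ) (ℝ × (Fin n → ℂ)) ℝ).flip
      (ContinuousLinearMap.inr ℝ ℝ (Fin n → ℂ)) with hpre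
  have hpre_apply : ∀ (C : (ℝ × (Fin n → ℂ)) →L[ℝ] ℝ) (w : Fin n → ℂ),
      pre C w = C (0, w) := by
    intro C w
    simp [hpre]
  -- smoothness of Ψ near (0,a)
  have hΨc : ContDiffAt ℝ 1 Ψ (0, a) := by
    exact (lag_smooth m hG0).fderiv_right (by norm_num)
  set P : (ℝ × (Fin n → ℂ)) →L[ℝ] ((ℝ × (Fin n → ℂ)) →L[ℝ] ℝ) := fderiv ℝ Ψ (0, a) with hP
  have hPd : HasFDerivAt Ψ P (0, a) := (hΨc.differentiableAt one_ne_zero).hasFDerivAt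
  -- derivative of Fm at (0,a)
  have hFd : HasFDerivAt Fm ((Tmap n).comp P + ℓ) (0, a) := by
    have h1 : HasFDerivAt (fun p => Tmap n (Ψ p)) ((Tmap n).comp P) (0, a) :=
      ((Tmap n).hasFDerivAt.comp (0, a) hPd : HasFDerivAt (⇑(Tmap n) ∘ Ψ) _ _)
    exact h1.add ℓ.hasFDerivAt
  have hFc : ContDiffAt ℝ 1 Fm (0, a) := by
    apply ContDiffAt.add
    · exact (Tmap n).contDiff.comp_contDiffAt _ hΨc
    · exact ℓ.contDiff.contDiffAt
  -- the second derivative bridge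
  have hevGa : ∀ᶠ q in nhds ((0:ℝ), a), Good n q := good_eventually hG0
  have htend : Filter.Tendsto (fun w : Fin n → ℂ => ((0:ℝ), w)) (nhds a) (nhds ((0:ℝ), a)) := by
    exact (continuous_const.prodMk continuous_id).continuousAt
  have hevG0u : ∀ᶠ w in nhds a, Good n ((0:ℝ), w) := htend.eventually hevGa
  have hLag0smooth : ∀ w : Fin n → ℂ, Good n ((0:ℝ), w) →
      ContDiffAt ℝ 2 (fun w' : Fin n → ℂ => Lag n m 0 w') w := by
    intro w hw
    have h2 : ContDiffAt ℝ 2 (fun w' : Fin n → ℂ => ((0:ℝ), w')) w :=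
      contDiffAt_const.prodMk contDiffAt_id
    exact (lag_smooth m hw).comp w h2
  have hfd0 : ∀ w : Fin n → ℂ, Good n ((0:ℝ), w) →
      HasFDerivAt (fun w' : Fin n → ℂ => Lag n m 0 w') (pre (Ψ (0, w))) w := by
    intro w hw
    have hLJd : HasFDerivAt LJ (Ψ (0, w)) ((0:ℝ), w) :=
      ((lag_smooth m hw).differentiableAt (by norm_num)).hasFDerivAt
    have hinrd : HasFDerivAt (fun w' : Fin n → ℂ => ((0:ℝ), w'))
        (ContinuousLinearMap.inr ℝ ℝ (Fin n → ℂ)) w := by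
      have := (ContinuousLinearMap.inr ℝ ℝ (Fin n → ℂ)).hasFDerivAt (x := w)
      have heq : ⇑(ContinuousLinearMap.inr ℝ ℝ (Fin n → ℂ)) =
          fun w' : Fin n → ℂ => ((0:ℝ), w') := by
        funext w'; simp
      rwa [heq] at this
    have hc := hLJd.comp w hinrd
    have heq2 : (LJ ∘ fun w' : Fin n → ℂ => ((0:ℝ), w')) =
        fun w' : Fin n → ℂ => Lag n m 0 w' := rfl
    have heq3 : (Ψ (0, w)).comp (ContinuousLinearMap.inr ℝ ℝ (Fin n → ℂ)) = pre (Ψ (0, w)) := by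
      apply ContinuousLinearMap.ext
      intro w'
      rw [hpre_apply]
      simp
    rw [heq2, heq3] at hc
    exact hc
  have hclaimA : (fun w : Fin n → ℂ => pre (Ψ (0, w))) =ᶠ[nhds a]
      (fun w : Fin n → ℂ => fderiv ℝ (fun w' : Fin n → ℂ => Lag n m 0 w') w) := by
    filter_upwards [hevG0u] with w hw
    exact ((hfd0 w hw).fderiv).symm
  have hgd : HasFDerivAt (fun w : Fin n → ℂ => pre (Ψ (0, w)))
      (pre.comp (P.comp (ContinuousLinearMap.inr ℝ ℝ (Fin n → ℂ)))) a := by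
    have hPd' : HasFDerivAt Ψ P ((ContinuousLinearMap.inr ℝ ℝ (Fin n → ℂ)) a) := by
      have : (ContinuousLinearMap.inr ℝ ℝ (Fin n → ℂ)) a = ((0:ℝ), a) := by simp
      rw [this]; exact hPd
    have h1 := hPd'.comp a ((ContinuousLinearMap.inr ℝ ℝ (Fin n → ℂ)).hasFDerivAt (x := a))
    have h2 := pre.hasFDerivAt.comp a h1
    have heq : (⇑pre ∘ (Ψ ∘ ⇑(ContinuousLinearMap.inr ℝ ℝ (Fin n → ℂ)))) =
        fun w : Fin n → ℂ => pre (Ψ (0, w)) := by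
      funext w; simp
    rwa [heq] at h2
  set H2 : (Fin n → ℂ) →L[ℝ] ((Fin n → ℂ) →L[ℝ] ℝ) :=
    pre.comp (P.comp (ContinuousLinearMap.inr ℝ ℝ (Fin n → ℂ))) with hH2def
  have hH2d : HasFDerivAt
      (fun u : Fin n → ℂ => fderiv ℝ (fun w : Fin n → ℂ => Lag n m 0 w) u) H2 a :=
    (Filter.EventuallyEq.hasFDerivAt_iff hclaimA).mp hgd
  have hH2 : fderiv ℝ
      (fun u : Fin n → ℂ => fderiv ℝ (fun w : Fin n → ℂ => Lag n m 0 w) u) a = H2 :=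
    hH2d.fderiv
  have hH2app : ∀ v w : Fin n → ℂ, H2 v w = P (0, v) (0, w) := by
    intro v w
    rw [hH2def]
    simp only [ContinuousLinearMap.comp_apply, ContinuousLinearMap.inr_apply]
    rw [hpre_apply]
  have hsymm : ∀ v w : Fin n → ℂ, H2 v w = H2 w v := by
    intro v w
    refine second_derivative_symmetric_of_eventually
      (f := fun w' : Fin n → ℂ => Lag n m 0 w')
      (f' := fun u : Fin n → ℂ => fderiv ℝ (fun w' : Fin n → ℂ => Lag n m 0 w') u)
      ?_ hH2d v w
    filter_upwards [hevG0u] with w' hw'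
    exact (hfd0 w' hw').fderiv ▸ (hfd0 w' hw')
  -- nondegeneracy: H2 Ja = 0
  have hH2Ja : H2 Ja = 0 := by
    rw [← hH2]
    exact (hnondeg Ja).mpr ⟨1, (one_smul ℝ _).symm⟩
  -- the full derivative map and its injectivity
  set A : (ℝ × (Fin n → ℂ)) →L[ℝ] (ℝ × (Fin n → ℂ)) :=
    (ContinuousLinearMap.fst ℝ ℝ (Fin n → ℂ)).prod ((Tmap n).comp P + ℓ) with hA
  have hAinj : Function.Injective A := by
    intro x y hxy
    rw [← sub_eq_zero, ← map_sub] at hxy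
    set d := x - y with hd
    have hd1 : d.1 = 0 := congrArg Prod.fst hxy
    have hd2 : Tmap n (P d) + ipR d.2 Ja • Ja = 0 := by
      have := congrArg Prod.snd hxy
      simp only [hA, ContinuousLinearMap.prod_apply, ContinuousLinearMap.add_apply,
        ContinuousLinearMap.comp_apply] at this
      rw [hℓ_apply] at this
      exact this
    have hdpair : d = ((0:ℝ), d.2) := by
      rw [← hd1]
    have hTd : ∀ j, Tmap n (P d) j =
        ((pre (P d)) (Pi.single j 1) : ℝ) + ((pre (P d)) (Pi.single j Complex.I) : ℝ) * Complex.I := by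
      intro j
      rw [Tmap_apply, hpre_apply, hpre_apply]
    have hipT : ipR (Tmap n (P d)) Ja = pre (P d) Ja := by
      have heqf : (Tmap n (P d)) = (fun j => (((pre (P d)) (Pi.single j 1) : ℝ) : ℂ) +
          (((pre (P d)) (Pi.single j Complex.I) : ℝ) : ℂ) * Complex.I) := funext hTd
      rw [heqf]
      exact ip_vec (pre (P d)) Ja
    have hPJa : pre (P d) Ja = 0 := by
      rw [hpre_apply]
      have : P d (0, Ja) = P (0, d.2) (0, Ja) := by rw [← hdpair]
      rw [this, ← hH2app, hsymm]
      rw [hH2Ja]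
      rfl
    have hc0 : ipR d.2 Ja = 0 := by
      have h0 : ipR (Tmap n (P d) + ipR d.2 Ja • Ja) Ja = 0 := by rw [hd2]; simp [ipR]
      rw [ipR_add, ipR_smul, hipT, hPJa] at h0
      have := h0
      simp only [zero_add] at this
      exact (mul_eq_zero.mp this).resolve_right hipJJ.ne'
    have hT0 : Tmap n (P d) = 0 := by
      have := hd2
      rw [hc0, zero_smul, add_zero] at this
      exact this
    have hB0 : ∀ j, pre (P d) (Pi.single j 1) = 0 ∧ pre (P d) (Pi.single j Complex.I) = 0 := by
      intro j
      have h := congrFun hT0 j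
      rw [hTd j] at h
      have hre := congrArg Complex.re h
      have him := congrArg Complex.im h
      simp at hre him
      exact ⟨hre, him⟩
    have hBzero : pre (P d) = 0 := by
      apply ContinuousLinearMap.ext
      intro w
      rw [clm_decomp (pre (P d)) w]
      simp [fun j => (hB0 j).1, fun j => (hB0 j).2]
    have hH2d2 : H2 d.2 = 0 := by
      apply ContinuousLinearMap.ext
      intro w
      rw [hH2app]
      have : P (0, d.2) = P d := by rw [← hdpair]
      rw [this, ← hpre_apply, hBzero]
    obtain ⟨t, ht⟩ := (hnondeg d.2).mp (by rw [hH2]; exact hH2d2)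
    have ht0 : t = 0 := by
      have : ipR d.2 Ja = t * ipR Ja Ja := by
        rw [ht]; exact ipR_smul t Ja Ja
      rw [hc0] at this
      exact ((mul_eq_zero.mp this.symm).resolve_right hipJJ.ne')
    have hdz : d = 0 := by
      have : d.2 = 0 := by rw [ht, ht0, zero_smul]
      rw [hdpair, this]
      rfl
    exact sub_eq_zero.mp (hd ▸ hdz)
  -- the map Φ and inverse function theorem
  set Φ : ℝ × (Fin n → ℂ) → ℝ × (Fin n → ℂ) := fun p => (p.1, Fm p) with hΦ
  have hΦd : HasFDerivAt Φ A (0, a) :=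
    HasFDerivAt.prodMk (ContinuousLinearMap.fst ℝ ℝ (Fin n → ℂ)).hasFDerivAt hFd
  have hΦc : ContDiffAt ℝ 1 Φ (0, a) := contDiffAt_fst.prodMk hFc
  set eA : (ℝ × (Fin n → ℂ)) ≃L[ℝ] (ℝ × (Fin n → ℂ)) :=
    LinearEquiv.toContinuousLinearEquiv
      (LinearMap.linearEquivOfInjective A.toLinearMap hAinj rfl) with heA
  have heAcoe : (eA : (ℝ × (Fin n → ℂ)) →L[ℝ] (ℝ × (Fin n → ℂ))) = A := by
    apply ContinuousLinearMap.ext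
    intro x
    rfl
  have hstrict : HasStrictFDerivAt Φ
      (eA : (ℝ × (Fin n → ℂ)) →L[ℝ] (ℝ × (Fin n → ℂ))) (0, a) := by
    have h := hΦc.hasStrictFDerivAt one_ne_zero
    rw [hΦd.fderiv] at h
    rw [heAcoe]
    exact h
  set PH := HasStrictFDerivAt.toOpenPartialHomeomorph Φ hstrict with hPH
  have hsource : ((0:ℝ), a) ∈ PH.source := HasStrictFDerivAt.mem_toOpenPartialHomeomorph_source hstrict
  have hPHcoe : ⇑PH = Φ := HasStrictFDerivAt.toOpenPartialHomeomorph_coe hstrict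
  -- value at (0,a)
  have hgrad0 : Tmap n (Ψ (0, a)) = 0 := by
    have h := gradL_eq m hG0
    rw [← h]
    exact hcrit
  have hF0 : Fm (0, a) = 0 := by
    rw [hFm]
    show Tmap n (Ψ (0, a)) + ℓ (0, a) = 0
    rw [hgrad0, hℓ_apply]
    show 0 + ipR a Ja • Ja = 0
    rw [hJa, ipR_J_self a, zero_smul, add_zero]
  have hΦ0 : Φ (0, a) = (0, 0) := by
    rw [hΦ]
    show (((0:ℝ), a).1, Fm (0, a)) = ((0:ℝ), (0 : Fin n → ℂ))
    rw [hF0]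
  have htarget : ((0:ℝ), (0 : Fin n → ℂ)) ∈ PH.target := by
    rw [← hΦ0, ← hPHcoe]
    exact PH.map_source hsource
  have hsymm0 : PH.symm (0, 0) = ((0:ℝ), a) := by
    rw [← hΦ0, ← hPHcoe]
    exact PH.left_inv hsource
  -- the open neighborhood of good points with positive overlap
  have hipcont : Continuous (fun q : ℝ × (Fin n → ℂ) => ipR a q.2) := by
    unfold ipR
    apply continuous_finset_sum
    intro j _
    exact Complex.continuous_re.comp
      (continuous_const.mul (Complex.continuous_conj.comp
        ((continuous_apply j).comp continuous_snd)))
  have hevW : ∀ᶠ q in nhds ((0:ℝ), a), Good n q ∧ 0 < ipR a q.2 := by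
    refine hevGa.and ?_
    exact hipcont.continuousAt.eventually (eventually_gt_nhds hipaa)
  obtain ⟨W, hWsub, hWopen, hWmem⟩ := mem_nhds_iff.mp hevW
  -- shrink to a ball
  have hOopen : IsOpen (PH.symm.source ∩ ⇑PH.symm ⁻¹' W) :=
    PH.symm.isOpen_inter_preimage hWopen
  have hO0 : ((0:ℝ), (0 : Fin n → ℂ)) ∈ PH.symm.source ∩ ⇑PH.symm ⁻¹' W := by
    constructor
    · rw [OpenPartialHomeomorph.symm_source]
      exact htarget
    · show PH.symm (0, 0) ∈ W
      rw [hsymm0]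
      exact hWmem
  have hgcont : Continuous (fun κ : ℝ => ((κ : ℝ), (0 : Fin n → ℂ))) :=
    continuous_id.prodMk continuous_const
  have hSopen : IsOpen ((fun κ : ℝ => ((κ : ℝ), (0 : Fin n → ℂ))) ⁻¹'
      (PH.symm.source ∩ ⇑PH.symm ⁻¹' W)) := hOopen.preimage hgcont
  have hS0 : (0:ℝ) ∈ (fun κ : ℝ => ((κ : ℝ), (0 : Fin n → ℂ))) ⁻¹'
      (PH.symm.source ∩ ⇑PH.symm ⁻¹' W) := hO0
  obtain ⟨κ₀, hκ₀pos, hball⟩ := Metric.isOpen_iff.mp hSopen 0 hS0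
  refine ⟨κ₀, hκ₀pos, fun κ => (PH.symm (κ, 0)).2, ?_, ?_, ?_⟩
  · -- continuity
    have hIoo : Set.Ioo (-κ₀) κ₀ = Metric.ball (0:ℝ) κ₀ := by
      rw [Real.ball_eq_Ioo]
      norm_num
    rw [hIoo]
    apply Continuous.comp_continuousOn continuous_snd
    apply PH.symm.continuousOn.comp hgcont.continuousOn
    intro κ hκ
    exact (hball hκ).1
  · -- value at 0
    show (PH.symm ((0:ℝ), (0 : Fin n → ℂ))).2 = a
    rw [hsymm0]
  · -- the equilibrium property
    intro κ hκ
    have hκball : κ ∈ Metric.ball (0:ℝ) κ₀ := by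
      rw [Metric.mem_ball, Real.dist_eq, sub_zero]
      exact hκ
    have hmem := hball hκball
    set q := PH.symm (κ, 0) with hq
    have hqW : q ∈ W := hmem.2
    have hqsource : q ∈ PH.source := by
      have := PH.map_target (x := (κ, 0)) ?_
      · exact this
      · have := hmem.1
        rwa [OpenPartialHomeomorph.symm_source] at this
    have hΦq : Φ q = (κ, 0) := by
      rw [← hPHcoe]
      apply PH.right_inv
      have := hmem.1
      rwa [OpenPartialHomeomorph.symm_source] at this
    have hq1 : q.1 = κ := congrArg Prod.fst hΦq
    have hFq : Fm q = 0 := congrArg Prod.snd hΦq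
    have hqGood : Good n q := (hWsub hqW).1
    have hqip : 0 < ipR a q.2 := (hWsub hqW).2
    -- gradient vanishes
    have hgradq : gradL n m q.1 q.2 = Tmap n (Ψ q) := gradL_eq m hqGood
    have hTq : Tmap n (Ψ q) = -(ipR q.2 Ja • Ja) := by
      have := hFq
      rw [hFm] at this
      have h2 : Tmap n (Ψ q) + ℓ q = 0 := this
      rw [hℓ_apply] at h2
      exact eq_neg_of_add_eq_zero_left h2
    have hrot : Ψ q (0, fun j => Complex.I * q.2 j) = 0 := rot_deriv m hqGood
    have hipTq : ipR (Tmap n (Ψ q)) (fun j => Complex.I * q.2 j)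
        = pre (Ψ q) (fun j => Complex.I * q.2 j) := by
      have heqf : (Tmap n (Ψ q)) = (fun j => (((pre (Ψ q)) (Pi.single j 1) : ℝ) : ℂ) +
          (((pre (Ψ q)) (Pi.single j Complex.I) : ℝ) : ℂ) * Complex.I) := by
        funext j
        rw [Tmap_apply, hpre_apply, hpre_apply]
      rw [heqf]
      exact ip_vec _ _
    have hpreq : pre (Ψ q) (fun j => Complex.I * q.2 j) = 0 := by
      rw [hpre_apply]
      exact hrot
    have hcq : ipR q.2 Ja = 0 := by
      have h6 : ipR (Tmap n (Ψ q)) (fun j => Complex.I * q.2 j) = 0 := by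
        rw [hipTq, hpreq]
      rw [hTq, ← neg_smul, ipR_smul] at h6
      have h7 : ipR Ja (fun j => Complex.I * q.2 j) = ipR a q.2 := by
        rw [hJa]
        exact ipR_JJ a q.2
      rw [h7] at h6
      have h8 := (mul_eq_zero.mp h6).resolve_right hqip.ne'
      linarith
    have hgradzero : gradL n m q.1 q.2 = 0 := by
      rw [hgradq, hTq, hcq, zero_smul, neg_zero]
    constructor
    · intro j k hjk
      by_contra hne
      exact hqGood.1 j k hne hjk
    · show gradL n m κ q.2 = 0
      rw [hq1] at hgradzero
      exact hgradzero
end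

section
/- Let n ≥ 2 and m₁, …, mₙ > 0. Let κ ∈ ℝ, α ∈ ℝ, and let u ∈ ℂⁿ be nonzero with pairwise distinct components. If ∇L(u; κ) + α·𝒥u = 0, where 𝒥u = (i·u₁, …, i·uₙ), then α = 0 and ∇L(u; κ) = 0; that is, every zero of the augmented map with nonzero u is a genuine relative equilibrium of the n-body problem in the space of constant curvature κ. -/
open scoped BigOperators

/-! ### Auxiliary lemmas -/

section Aux

open Complex Filter Topology Finset

lemma sqArg (z w : ℂ) (κ : ℝ) :
    κ ^ 2 * ‖z‖ ^ 2 * ‖w‖ ^ 2 + 2 * κ * (z * (starRingEnd ℂ) w).re + 1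
      = Complex.normSq ((κ:ℂ) * (z * (starRingEnd ℂ) w) + 1) := by
  simp [Complex.normSq_apply, Complex.mul_re, Complex.mul_im, Complex.sq_norm]
  ring

lemma Vpot_eq (z w : ℂ) (κ : ℝ) :
    Vpot z w κ =
      (4 * κ * (z * (starRingEnd ℂ) w).re +
        (κ * Complex.normSq w - 1) * (κ * Complex.normSq z - 1)) /
      (2 * Real.sqrt (Complex.normSq (z - w)) *
        Real.sqrt (Complex.normSq ((κ:ℂ) * (z * (starRingEnd ℂ) w) + 1))) := by
  rw [Vpot, sqArg, Complex.sq_norm, Complex.sq_norm, Complex.norm_def]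

lemma Vpot_symm (z w : ℂ) (κ : ℝ) : Vpot z w κ = Vpot w z κ := by
  have h1 : (z * (starRingEnd ℂ) w).re = (w * (starRingEnd ℂ) z).re := by
    rw [← Complex.conj_re (w * (starRingEnd ℂ) z)]; simp [mul_comm]
  rw [Vpot, Vpot, h1, norm_sub_rev z w]
  ring_nf

lemma diff_normSq : Differentiable ℝ Complex.normSq := by
  have : Complex.normSq = fun z : ℂ => z.re * z.re + z.im * z.im :=
    funext fun z => Complex.normSq_apply z
  rw [this]
  exact (Complex.reCLM.differentiable.mul Complex.reCLM.differentiable).add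
    (Complex.imCLM.differentiable.mul Complex.imCLM.differentiable)

variable {E : Type*} [NormedAddCommGroup E] [NormedSpace ℝ E]

lemma diff_conj {f : E → ℂ} {x : E} (hf : DifferentiableAt ℝ f x) :
    DifferentiableAt ℝ (fun y => (starRingEnd ℂ) (f y)) x :=
  (Complex.conjCLE.differentiable.differentiableAt).comp x hf

lemma differentiableAt_Vpot {f g : E → ℂ} {x : E}
    (hf : DifferentiableAt ℝ f x) (hg : DifferentiableAt ℝ g x) (κ : ℝ)
    (hne : f x ≠ g x) (hreg : (κ:ℂ) * (f x * (starRingEnd ℂ) (g x)) + 1 ≠ 0) :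
    DifferentiableAt ℝ (fun y => Vpot (f y) (g y) κ) x := by
  simp only [Vpot_eq]
  have hmul : DifferentiableAt ℝ (fun y => f y * (starRingEnd ℂ) (g y)) x :=
    hf.mul (diff_conj hg)
  have hre : DifferentiableAt ℝ (fun y => (f y * (starRingEnd ℂ) (g y)).re) x :=
    (Complex.reCLM.differentiable.differentiableAt).comp x hmul
  have hnum : DifferentiableAt ℝ (fun y =>
      4 * κ * (f y * (starRingEnd ℂ) (g y)).re +
        (κ * Complex.normSq (g y) - 1) * (κ * Complex.normSq (f y) - 1)) x := by
    exact ((differentiableAt_const _).mul hre).add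
      ((((differentiableAt_const κ).mul ((diff_normSq _).comp x hg)).sub
        (differentiableAt_const 1)).mul
       (((differentiableAt_const κ).mul ((diff_normSq _).comp x hf)).sub
        (differentiableAt_const 1)))
  have h1 : Complex.normSq (f x - g x) ≠ 0 := by
    simpa [Complex.normSq_eq_zero, sub_eq_zero] using hne
  have h2 : Complex.normSq ((κ:ℂ) * (f x * (starRingEnd ℂ) (g x)) + 1) ≠ 0 := by
    simpa [Complex.normSq_eq_zero] using hreg
  have hs1 : DifferentiableAt ℝ (fun y => Real.sqrt (Complex.normSq (f y - g y))) x :=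
    ((diff_normSq _).comp x (hf.sub hg)).sqrt h1
  have hs2 : DifferentiableAt ℝ
      (fun y => Real.sqrt (Complex.normSq ((κ:ℂ) * (f y * (starRingEnd ℂ) (g y)) + 1))) x :=
    ((diff_normSq _).comp x
      (((differentiableAt_const _).mul hmul).add (differentiableAt_const 1))).sqrt h2
  have hden : DifferentiableAt ℝ (fun y =>
      2 * Real.sqrt (Complex.normSq (f y - g y)) *
        Real.sqrt (Complex.normSq ((κ:ℂ) * (f y * (starRingEnd ℂ) (g y)) + 1))) x :=
    (((differentiableAt_const 2).mul hs1).mul hs2)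
  have hpos : (0:ℝ) < 2 * Real.sqrt (Complex.normSq (f x - g x)) *
      Real.sqrt (Complex.normSq ((κ:ℂ) * (f x * (starRingEnd ℂ) (g x)) + 1)) := by
    have a1 : 0 < Real.sqrt (Complex.normSq (f x - g x)) :=
      Real.sqrt_pos.2 (lt_of_le_of_ne (Complex.normSq_nonneg _) (Ne.symm h1))
    have a2 : 0 < Real.sqrt (Complex.normSq ((κ:ℂ) * (f x * (starRingEnd ℂ) (g x)) + 1)) :=
      Real.sqrt_pos.2 (lt_of_le_of_ne (Complex.normSq_nonneg _) (Ne.symm h2))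
    positivity
  simp only [div_eq_mul_inv]
  exact hnum.mul (hden.inv (ne_of_gt hpos))

lemma kin_eq (z : ℂ) (κ : ℝ) (c : ℝ) :
    c * lamConf z κ * ‖z‖ ^ 2
      = c * (4 / (1 + κ * Complex.normSq z) ^ 2) * Complex.normSq z := by
  rw [lamConf, Complex.sq_norm]

lemma differentiableAt_kin {f : E → ℂ} {x : E} (hf : DifferentiableAt ℝ f x) (κ c : ℝ)
    (hreg : 1 + κ * Complex.normSq (f x) ≠ 0) :
    DifferentiableAt ℝ (fun y => c * lamConf (f y) κ * ‖f y‖ ^ 2) x := by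
  simp only [kin_eq]
  have hns : DifferentiableAt ℝ (fun y => Complex.normSq (f y)) x := (diff_normSq _).comp x hf
  have hden : DifferentiableAt ℝ (fun y => (1 + κ * Complex.normSq (f y)) ^ 2) x :=
    ((differentiableAt_const 1).add ((differentiableAt_const κ).mul hns)).pow 2
  have h0 : ((1 + κ * Complex.normSq (f x)) ^ 2) ≠ 0 := pow_ne_zero _ hreg
  have : DifferentiableAt ℝ (fun y => 4 / (1 + κ * Complex.normSq (f y)) ^ 2) x := by
    simp only [div_eq_mul_inv]
    exact (differentiableAt_const 4).mul (hden.inv h0)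
  exact ((differentiableAt_const c).mul this).mul hns

lemma Vpot_rot (e z w : ℂ) (he : e * (starRingEnd ℂ) e = 1) (κ : ℝ) :
    Vpot (e * z) (e * w) κ = Vpot z w κ := by
  have h1 : (e * z) * (starRingEnd ℂ) (e * w) = z * (starRingEnd ℂ) w := by
    rw [map_mul]
    calc e * z * ((starRingEnd ℂ) e * (starRingEnd ℂ) w)
        = (e * (starRingEnd ℂ) e) * (z * (starRingEnd ℂ) w) := by ring
      _ = z * (starRingEnd ℂ) w := by rw [he, one_mul]
  have habs : ‖e‖ = 1 := by
    have := congrArg norm he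
    rw [norm_mul, norm_one, Complex.norm_conj] at this
    nlinarith [norm_nonneg e]
  have h2 : ‖e * z - e * w‖ = ‖z - w‖ := by
    rw [show e * z - e * w = e * (z - w) by ring, norm_mul, habs, one_mul]
  have h3 : ‖e * z‖ = ‖z‖ := by rw [norm_mul, habs, one_mul]
  have h4 : ‖e * w‖ = ‖w‖ := by rw [norm_mul, habs, one_mul]
  rw [Vpot, Vpot, h1, h2, h3, h4]

lemma Lag_rot (n : ℕ) (m : Fin n → ℝ) (κ : ℝ) (u : Fin n → ℂ) (e : ℂ)
    (he : e * (starRingEnd ℂ) e = 1) :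
    Lag n m κ (fun j => e * u j) = Lag n m κ u := by
  have habs : ‖e‖ = 1 := by
    have := congrArg norm he
    rw [norm_mul, norm_one, Complex.norm_conj] at this
    nlinarith [norm_nonneg e]
  rw [Lag, Lag]
  congr 1
  · congr 1
    refine Finset.sum_congr rfl fun j _ => ?_
    rw [lamConf, lamConf, norm_mul, habs, one_mul]
  · exact Finset.sum_congr rfl fun j _ => Finset.sum_congr rfl fun k _ => by
      rw [Vpot_rot e _ _ he]

lemma exists_decomp (n : ℕ) (m : Fin n → ℝ) (κ : ℝ) (u : Fin n → ℂ) (j : Fin n) :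
    ∃ C : ℝ, ∀ z : ℂ,
      Lag n m κ (Function.update u j z) =
        (1/2) * (m j * lamConf z κ * ‖z‖ ^ 2)
          + (∑ k ∈ Finset.univ.erase j, m j * m k * Vpot z (u k) κ) + C := by
  refine ⟨(1/2) * ∑ i ∈ Finset.univ.erase j, m i * lamConf (u i) κ * ‖u i‖ ^ 2
      + ∑ i ∈ Finset.univ.erase j, ∑ k ∈ (Finset.Ioi i).erase j,
          m i * m k * Vpot (u i) (u k) κ, fun z => ?_⟩
  set v := Function.update u j z with hv
  have hvj : v j = z := Function.update_self j z u
  have hvi : ∀ i, i ≠ j → v i = u i := fun i hi => Function.update_of_ne hi z u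
  rw [Lag]
  have hkin : ∑ i, m i * lamConf (v i) κ * ‖v i‖ ^ 2
      = m j * lamConf z κ * ‖z‖ ^ 2
        + ∑ i ∈ Finset.univ.erase j, m i * lamConf (u i) κ * ‖u i‖ ^ 2 := by
    rw [← Finset.add_sum_erase _ _ (Finset.mem_univ j), hvj]
    congr 1
    exact Finset.sum_congr rfl fun i hi => by rw [hvi i (Finset.mem_erase.1 hi).1]
  have hrow : ∀ i : Fin n, i ≠ j →
      ∑ k ∈ Finset.Ioi i, m i * m k * Vpot (v i) (v k) κ
        = (if i < j then m i * m j * Vpot (u i) z κ else 0)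
          + ∑ k ∈ (Finset.Ioi i).erase j, m i * m k * Vpot (u i) (u k) κ := by
    intro i hi
    by_cases hij : i < j
    · rw [← Finset.add_sum_erase _ _ (Finset.mem_Ioi.2 hij), if_pos hij, hvj, hvi i hi]
      congr 1
      exact Finset.sum_congr rfl fun k hk => by
        rw [hvi k (Finset.mem_erase.1 hk).1]
    · rw [if_neg hij, zero_add,
        Finset.erase_eq_of_notMem (by simp [Finset.mem_Ioi, hij])]
      exact Finset.sum_congr rfl fun k hk => by
        rw [hvi i hi, hvi k (by rintro rfl; exact hij (Finset.mem_Ioi.1 hk))]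
  have hpair : ∑ i, ∑ k ∈ Finset.Ioi i, m i * m k * Vpot (v i) (v k) κ
      = (∑ k ∈ Finset.univ.erase j, m j * m k * Vpot z (u k) κ)
        + ∑ i ∈ Finset.univ.erase j, ∑ k ∈ (Finset.Ioi i).erase j,
            m i * m k * Vpot (u i) (u k) κ := by
    rw [← Finset.add_sum_erase _ _ (Finset.mem_univ j)]
    have hrj : ∑ k ∈ Finset.Ioi j, m j * m k * Vpot (v j) (v k) κ
        = ∑ k ∈ Finset.Ioi j, m j * m k * Vpot z (u k) κ := by
      refine Finset.sum_congr rfl fun k hk => ?_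
      rw [hvj, hvi k (by rintro rfl; exact absurd (Finset.mem_Ioi.1 hk) (lt_irrefl _))]
    rw [hrj, Finset.sum_congr rfl (fun i hi => hrow i (Finset.mem_erase.1 hi).1),
      Finset.sum_add_distrib]
    have hI : (∑ i ∈ Finset.univ.erase j,
          if i < j then m i * m j * Vpot (u i) z κ else 0)
        = ∑ i ∈ Finset.Iio j, m j * m i * Vpot z (u i) κ := by
      rw [← Finset.sum_filter]
      have hset : (Finset.univ.erase j).filter (fun i => i < j) = Finset.Iio j := by
        ext i
        simp only [Finset.mem_filter, Finset.mem_erase, Finset.mem_univ, Finset.mem_Iio,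
          and_true, true_and]
        exact ⟨fun h => h.2, fun h => ⟨ne_of_lt h, h⟩⟩
      rw [hset]
      exact Finset.sum_congr rfl fun i _ => by rw [Vpot_symm]; ring
    rw [hI]
    have huni : Finset.univ.erase j = Finset.Iio j ∪ Finset.Ioi j := by
      ext i
      simp only [Finset.mem_erase, Finset.mem_univ, and_true, Finset.mem_union,
        Finset.mem_Iio, Finset.mem_Ioi]
      exact ne_iff_lt_or_gt
    have hdisj : Disjoint (Finset.Iio j) (Finset.Ioi j) := by
      rw [Finset.disjoint_left]
      intro a ha hb
      exact absurd (Finset.mem_Ioi.1 hb) (not_lt_of_gt (Finset.mem_Iio.1 ha))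
    rw [huni]; simp only [Finset.sum_union hdisj]
    ring
  rw [hkin, hpair]
  ring

end Aux

section Aux2
open Complex Filter Topology Finset

lemma eq_of_kin_pair {κ : ℝ} {z w : ℂ} (hk : 1 + κ * Complex.normSq z = 0)
    (hp : (κ:ℂ) * (z * (starRingEnd ℂ) w) + 1 = 0) : w = z := by
  have hz0 : z ≠ 0 := by
    rintro rfl; simp at hk
  have hκ0 : κ ≠ 0 := by
    rintro rfl; simp at hk
  have hzz : (κ:ℂ) * (z * (starRingEnd ℂ) z) + 1 = 0 := by
    rw [Complex.mul_conj]
    have := congrArg (Complex.ofReal) hk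
    push_cast at this ⊢
    linear_combination this
  have hfac : (κ:ℂ) * z * ((starRingEnd ℂ) w - (starRingEnd ℂ) z) = 0 := by
    linear_combination hp - hzz
  have hcz : (starRingEnd ℂ) w - (starRingEnd ℂ) z = 0 := by
    rcases mul_eq_zero.1 hfac with h1 | h2
    · rcases mul_eq_zero.1 h1 with h3 | h4
      · exact absurd h3 (Complex.ofReal_ne_zero.2 hκ0)
      · exact absurd h4 hz0
    · exact h2
  exact (starRingEnd ℂ).injective (sub_eq_zero.1 hcz)

lemma pair_unique {κ : ℝ} {z w₁ w₂ : ℂ}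
    (h1 : (κ:ℂ) * (z * (starRingEnd ℂ) w₁) + 1 = 0)
    (h2 : (κ:ℂ) * (z * (starRingEnd ℂ) w₂) + 1 = 0) : w₁ = w₂ := by
  have hz0 : z ≠ 0 := by
    rintro rfl; simp at h1
  have hκ0 : (κ:ℂ) ≠ 0 := by
    intro h0; rw [h0] at h1; simp at h1
  have hfac : (κ:ℂ) * z * ((starRingEnd ℂ) w₁ - (starRingEnd ℂ) w₂) = 0 := by
    linear_combination h1 - h2
  rcases mul_eq_zero.1 hfac with h3 | h4
  · rcases mul_eq_zero.1 h3 with h5 | h6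
    · exact absurd h5 hκ0
    · exact absurd h6 hz0
  · exact (starRingEnd ℂ).injective (sub_eq_zero.1 h4)

lemma Vnum_ne_zero {κ : ℝ} {z w : ℂ} (hzw : z ≠ w)
    (hp : (κ:ℂ) * (z * (starRingEnd ℂ) w) + 1 = 0) :
    4 * κ * (z * (starRingEnd ℂ) w).re +
      (κ * ‖w‖ ^ 2 - 1) * (κ * ‖z‖ ^ 2 - 1) ≠ 0 := by
  rw [Complex.sq_norm, Complex.sq_norm]
  intro h0
  have ha : κ * (z * (starRingEnd ℂ) w).re = -1 := by
    have := congrArg Complex.re hp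
    rw [Complex.add_re, Complex.re_ofReal_mul, Complex.one_re, Complex.zero_re] at this
    linarith
  have hbc : κ ^ 2 * (Complex.normSq z * Complex.normSq w) = 1 := by
    have h1 : (κ:ℂ) * (z * (starRingEnd ℂ) w) = -1 := by linear_combination hp
    have := congrArg Complex.normSq h1
    rw [Complex.normSq_mul, Complex.normSq_ofReal, Complex.normSq_mul,
      Complex.normSq_conj] at this
    simpa [sq] using this
  have e : (κ * Complex.normSq w - 1) * (κ * Complex.normSq z - 1)
      = κ ^ 2 * (Complex.normSq z * Complex.normSq w)
        - κ * Complex.normSq z - κ * Complex.normSq w + 1 := by ring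
  have h2 : κ * Complex.normSq z + κ * Complex.normSq w = -2 := by
    rw [e, hbc] at h0
    linarith [ha]
  have hsq : (κ * Complex.normSq z + 1) ^ 2 = 0 := by
    linear_combination (κ * Complex.normSq z) * h2 - hbc
  have hb : 1 + κ * Complex.normSq z = 0 := by
    have := pow_eq_zero_iff (n := 2) (by norm_num) |>.1 hsq
    linarith
  exact hzw (eq_of_kin_pair hb hp).symm

end Aux2

section Aux3
open Complex Filter Topology Finset

lemma not_cont_of_blowup {F G Bad : ℂ → ℝ} {γ : ℝ → ℂ} {x : ℂ}
    (hFG : ∀ z, F z = Bad z + G z) (hG : ContinuousAt G x)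
    (hγ : Filter.Tendsto γ (nhdsWithin (0:ℝ) (Set.Ioi 0)) (nhds x))
    (hBad : Filter.Tendsto (fun t => |Bad (γ t)|) (nhdsWithin (0:ℝ) (Set.Ioi 0)) Filter.atTop) :
    ¬ContinuousAt F x := by
  intro hF
  have h1 : Filter.Tendsto (fun t => F (γ t)) (nhdsWithin (0:ℝ) (Set.Ioi 0)) (nhds (F x)) :=
    hF.tendsto.comp hγ
  have h2 : Filter.Tendsto (fun t => G (γ t)) (nhdsWithin (0:ℝ) (Set.Ioi 0)) (nhds (G x)) :=
    hG.tendsto.comp hγ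
  have h3 : Filter.Tendsto (fun t => Bad (γ t)) (nhdsWithin (0:ℝ) (Set.Ioi 0))
      (nhds (F x - G x)) := by
    have := h1.sub h2
    refine this.congr fun t => ?_
    rw [hFG (γ t)]; ring
  exact not_tendsto_nhds_of_tendsto_atTop hBad _ h3.abs

lemma notdiff_pair {n : ℕ} {m : Fin n → ℝ} {κ : ℝ} {u : Fin n → ℂ}
    (hm : ∀ j, 0 < m j) (hu : Function.Injective u) {j k : Fin n} (hjk : j ≠ k)
    (hsing : (κ:ℂ) * (u j * (starRingEnd ℂ) (u k)) + 1 = 0) :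
    ¬DifferentiableAt ℝ (fun z => Lag n m κ (Function.update u j z)) (u j) := by
  obtain ⟨C, hC⟩ := exists_decomp n m κ u j
  have hκ0 : κ ≠ 0 := by rintro rfl; simp at hsing
  have hκ0' : (κ:ℂ) ≠ 0 := Complex.ofReal_ne_zero.2 hκ0
  have huj0 : u j ≠ 0 := by
    intro h0; rw [h0] at hsing; simp at hsing
  have huk0 : (starRingEnd ℂ) (u k) ≠ 0 := by
    intro h0; rw [h0] at hsing; simp at hsing
  have hujk : u j ≠ u k := fun e => hjk (hu e)
  have hkinreg : 1 + κ * Complex.normSq (u j) ≠ 0 := by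
    intro hk0
    exact hjk (hu (eq_of_kin_pair hk0 hsing)).symm
  set Num : ℂ → ℝ := fun z => 4 * κ * (z * (starRingEnd ℂ) (u k)).re +
      (κ * ‖u k‖ ^ 2 - 1) * (κ * ‖z‖ ^ 2 - 1) with hNum
  set Den : ℂ → ℝ := fun z =>
      2 * ‖z - u k‖ * ‖(κ:ℂ) * (z * (starRingEnd ℂ) (u k)) + 1‖
    with hDen
  have hVden : ∀ z, Vpot z (u k) κ = Num z / Den z := by
    intro z
    rw [Vpot, sqArg, ← Complex.norm_def]
  set Bad : ℂ → ℝ := fun z => m j * m k * Vpot z (u k) κ with hBadDef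
  set G : ℂ → ℝ := fun z => (1/2) * (m j * lamConf z κ * ‖z‖ ^ 2) +
      (∑ i ∈ (Finset.univ.erase j).erase k, m j * m i * Vpot z (u i) κ) + C with hGdef
  have hkmem : k ∈ Finset.univ.erase j := Finset.mem_erase.2 ⟨Ne.symm hjk, Finset.mem_univ k⟩
  have hFG : ∀ z, Lag n m κ (Function.update u j z) = Bad z + G z := by
    intro z
    rw [hC z, ← Finset.add_sum_erase _ _ hkmem]
    simp only [hBadDef, hGdef]
    ring
  have hG : ContinuousAt G (u j) := by
    have hd : DifferentiableAt ℝ G (u j) := by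
      refine DifferentiableAt.add (DifferentiableAt.add ?_ ?_) (differentiableAt_const C)
      · exact (differentiableAt_const ((1:ℝ)/2)).mul
          (differentiableAt_kin differentiableAt_id κ (m j) hkinreg)
      · refine DifferentiableAt.fun_sum fun i hi => ?_
        have hik : i ≠ k := (Finset.mem_erase.1 hi).1
        have hij : i ≠ j := (Finset.mem_erase.1 (Finset.mem_erase.1 hi).2).1
        refine (differentiableAt_const (m j * m i)).mul ?_
        refine differentiableAt_Vpot differentiableAt_id (differentiableAt_const (u i)) κ
          (fun e => hij (hu e).symm) ?_
        intro h0
        exact hik (hu (pair_unique hsing h0)).symm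
    exact hd.continuousAt
  set γ : ℝ → ℂ := fun t => u j + (t:ℂ) with hγdef
  have hγ : Filter.Tendsto γ (nhdsWithin (0:ℝ) (Set.Ioi 0)) (nhds (u j)) := by
    have hcont : Filter.Tendsto γ (nhds (0:ℝ)) (nhds (u j + ((0:ℝ):ℂ))) := by
      exact (tendsto_const_nhds.add ((Complex.continuous_ofReal.tendsto 0)))
    simp only [Complex.ofReal_zero, add_zero] at hcont
    exact hcont.mono_left nhdsWithin_le_nhds
  -- key factorization
  have hkey : ∀ z : ℂ, (κ:ℂ) * (z * (starRingEnd ℂ) (u k)) + 1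
      = (κ:ℂ) * (starRingEnd ℂ) (u k) * (z - u j) := by
    intro z
    linear_combination hsing
  have hN0 : Num (u j) ≠ 0 := Vnum_ne_zero hujk hsing
  have hposlim : 0 < m j * m k * |Num (u j)| := by
    have := abs_pos.2 hN0
    have := hm j; have := hm k
    positivity
  -- |Bad z| = (m j * m k * |Num z|) * (Den z)⁻¹
  have hBadAbs : ∀ z, |Bad z| = (m j * m k * |Num z|) * (Den z)⁻¹ := by
    intro z
    have hden_nonneg : 0 ≤ Den z := by
      simp only [hDen]
      positivity
    rw [hBadDef]
    simp only [hVden z]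
    rw [abs_mul, abs_mul, abs_div, _root_.abs_of_nonneg hden_nonneg,
      _root_.abs_of_pos (hm j), _root_.abs_of_pos (hm k), div_eq_mul_inv]
    ring
  have hNumCont : Filter.Tendsto (fun t => m j * m k * |Num (γ t)|)
      (nhdsWithin (0:ℝ) (Set.Ioi 0)) (nhds (m j * m k * |Num (u j)|)) := by
    have hNc : Continuous Num := by
      simp only [hNum]
      exact (continuous_const.mul
          (Complex.continuous_re.comp (continuous_id.mul continuous_const))).add
        (continuous_const.mul
          ((continuous_const.mul (continuous_norm.pow 2)).sub continuous_const))
    exact ((continuous_const.mul (hNc.abs)).tendsto (u j)).comp hγ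
  have hDenTend : Filter.Tendsto (fun t => Den (γ t)) (nhdsWithin (0:ℝ) (Set.Ioi 0))
      (nhdsWithin (0:ℝ) (Set.Ioi 0)) := by
    rw [tendsto_nhdsWithin_iff]
    constructor
    · have hDc : Continuous Den := by
        simp only [hDen]
        exact (continuous_const.mul
            (continuous_norm.comp (continuous_id.sub continuous_const))).mul
          (continuous_norm.comp
            ((continuous_const.mul (continuous_id.mul continuous_const)).add
              continuous_const))
      have := (hDc.tendsto (u j)).comp hγ
      simpa [hDen, hsing, Function.comp_def] using this
    · have hmem : Set.Ioo (0:ℝ) ‖u j - u k‖ ∈ nhdsWithin (0:ℝ) (Set.Ioi 0) := by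
        apply Ioo_mem_nhdsGT_of_mem
        exact ⟨le_refl 0, by rwa [norm_pos_iff, sub_ne_zero]⟩
      filter_upwards [hmem] with t ht
      have ht0 : (0:ℝ) < t := ht.1
      have h1 : γ t - u k ≠ 0 := by
        intro h0
        have : (t:ℂ) = u k - u j := by
          simp only [hγdef] at h0
          linear_combination h0
        have habs : |t| = ‖u j - u k‖ := by
          have := congrArg norm this
          rwa [Complex.norm_real, Real.norm_eq_abs, ← norm_neg (u k - u j), neg_sub] at this
        rw [abs_of_pos ht0] at habs
        exact absurd habs (ne_of_lt ht.2)
      have h2 : (κ:ℂ) * (γ t * (starRingEnd ℂ) (u k)) + 1 ≠ 0 := by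
        rw [hkey]
        apply mul_ne_zero (mul_ne_zero hκ0' huk0)
        simp only [hγdef]
        rw [add_sub_cancel_left]
        exact_mod_cast Complex.ofReal_ne_zero.2 (ne_of_gt ht0)
      simp only [hDen, Set.mem_Ioi]
      have a1 : 0 < ‖γ t - u k‖ := norm_pos_iff.2 h1
      have a2 : 0 < ‖(κ:ℂ) * (γ t * (starRingEnd ℂ) (u k)) + 1‖ :=
        norm_pos_iff.2 h2
      positivity
  have hBadTop : Filter.Tendsto (fun t => |Bad (γ t)|)
      (nhdsWithin (0:ℝ) (Set.Ioi 0)) Filter.atTop := by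
    have hinv : Filter.Tendsto (fun t => (Den (γ t))⁻¹)
        (nhdsWithin (0:ℝ) (Set.Ioi 0)) Filter.atTop :=
      tendsto_inv_nhdsGT_zero.comp hDenTend
    have := Filter.Tendsto.pos_mul_atTop hposlim hNumCont hinv
    refine this.congr fun t => ?_
    rw [hBadAbs]
  intro hdiff
  exact not_cont_of_blowup hFG hG hγ hBadTop hdiff.continuousAt

end Aux3

section Aux4
open Complex Filter Topology Finset

lemma notdiff_kin {n : ℕ} {m : Fin n → ℝ} {κ : ℝ} {u : Fin n → ℂ}
    (hm : ∀ j, 0 < m j) (hu : Function.Injective u) {j : Fin n}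
    (hks : 1 + κ * Complex.normSq (u j) = 0) :
    ¬DifferentiableAt ℝ (fun z => Lag n m κ (Function.update u j z)) (u j) := by
  obtain ⟨C, hC⟩ := exists_decomp n m κ u j
  have huj0 : u j ≠ 0 := by
    rintro h0; rw [h0] at hks; simp at hks
  set b : ℝ := ‖u j‖ ^ 2 with hb
  have hb0 : 0 < b := by
    have h1 : 0 < ‖u j‖ := norm_pos_iff.2 huj0
    simp only [hb]
    positivity
  have hks' : κ * b = -1 := by
    have : Complex.normSq (u j) = b := by rw [hb, Complex.sq_norm]
    rw [this] at hks; linarith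
  set Bad : ℂ → ℝ := fun z => (1/2) * (m j * lamConf z κ * ‖z‖ ^ 2) with hBadDef
  set G : ℂ → ℝ := fun z =>
      (∑ i ∈ Finset.univ.erase j, m j * m i * Vpot z (u i) κ) + C with hGdef
  have hFG : ∀ z, Lag n m κ (Function.update u j z) = Bad z + G z := by
    intro z
    rw [hC z]
    simp only [hBadDef, hGdef]
    ring
  have hG : ContinuousAt G (u j) := by
    have hd : DifferentiableAt ℝ G (u j) := by
      refine DifferentiableAt.add ?_ (differentiableAt_const C)
      refine DifferentiableAt.fun_sum fun i hi => ?_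
      have hij : i ≠ j := (Finset.mem_erase.1 hi).1
      refine (differentiableAt_const (m j * m i)).mul ?_
      refine differentiableAt_Vpot differentiableAt_id (differentiableAt_const (u i)) κ
        (fun e => hij (hu e).symm) ?_
      intro h0
      exact hij (hu (eq_of_kin_pair hks h0))
    exact hd.continuousAt
  set γ : ℝ → ℂ := fun t => ((1 - t : ℝ) : ℂ) * u j with hγdef
  have hγ : Filter.Tendsto γ (nhdsWithin (0:ℝ) (Set.Ioi 0)) (nhds (u j)) := by
    have hcont : Filter.Tendsto γ (nhds (0:ℝ)) (nhds (((1 - 0 : ℝ) : ℂ) * u j)) := by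
      exact ((Complex.continuous_ofReal.comp (continuous_const.sub continuous_id)).mul
        continuous_const).tendsto 0
    simp only [sub_zero, Complex.ofReal_one, one_mul] at hcont
    exact hcont.mono_left nhdsWithin_le_nhds
  have hkeyt : ∀ t : ℝ, 1 + κ * ((1 - t) ^ 2 * b) = t * (2 - t) := by
    intro t
    linear_combination (1 - t) ^ 2 * hks'
  have habsγ : ∀ t : ℝ, ‖γ t‖ ^ 2 = (1 - t) ^ 2 * b := by
    intro t
    simp only [hγdef]
    rw [norm_mul, mul_pow, Complex.norm_real, Real.norm_eq_abs, ← hb]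
    rw [_root_.sq_abs]
  have hBadγ : ∀ t : ℝ, Bad (γ t)
      = (2 * m j * b * (1 - t) ^ 2) * ((t * (2 - t)) ^ 2)⁻¹ := by
    intro t
    simp only [hBadDef, lamConf]
    rw [habsγ t, hkeyt t, div_eq_mul_inv]
    ring
  have hQ : Filter.Tendsto (fun t : ℝ => (t * (2 - t)) ^ 2)
      (nhdsWithin (0:ℝ) (Set.Ioi 0)) (nhdsWithin (0:ℝ) (Set.Ioi 0)) := by
    rw [tendsto_nhdsWithin_iff]
    constructor
    · have : Continuous (fun t : ℝ => (t * (2 - t)) ^ 2) := by continuity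
      have h0 := this.tendsto 0
      simp only [zero_mul, sub_zero, mul_zero] at h0
      norm_num at h0
      exact h0.mono_left nhdsWithin_le_nhds
    · have hmem : Set.Ioo (0:ℝ) 1 ∈ nhdsWithin (0:ℝ) (Set.Ioi 0) :=
        Ioo_mem_nhdsGT_of_mem ⟨le_refl 0, one_pos⟩
      filter_upwards [hmem] with t ht
      have h1 : 0 < t * (2 - t) := by nlinarith [ht.1, ht.2]
      simp only [Set.mem_Ioi]
      positivity
  have hP : Filter.Tendsto (fun t : ℝ => 2 * m j * b * (1 - t) ^ 2)
      (nhdsWithin (0:ℝ) (Set.Ioi 0)) (nhds (2 * m j * b)) := by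
    have : Continuous (fun t : ℝ => 2 * m j * b * (1 - t) ^ 2) := by continuity
    have h0 := this.tendsto 0
    simp only [sub_zero, one_pow, mul_one] at h0
    exact h0.mono_left nhdsWithin_le_nhds
  have hposlim : 0 < 2 * m j * b := by
    have := hm j; positivity
  have hBadTop : Filter.Tendsto (fun t => Bad (γ t))
      (nhdsWithin (0:ℝ) (Set.Ioi 0)) Filter.atTop := by
    have hinv : Filter.Tendsto (fun t : ℝ => ((t * (2 - t)) ^ 2)⁻¹)
        (nhdsWithin (0:ℝ) (Set.Ioi 0)) Filter.atTop :=
      tendsto_inv_nhdsGT_zero.comp hQ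
    have := Filter.Tendsto.pos_mul_atTop hposlim hP hinv
    refine this.congr fun t => ?_
    rw [hBadγ]
  have hBadTopAbs : Filter.Tendsto (fun t => |Bad (γ t)|)
      (nhdsWithin (0:ℝ) (Set.Ioi 0)) Filter.atTop :=
    tendsto_atTop_mono (fun t => le_abs_self _) hBadTop
  intro hdiff
  exact not_cont_of_blowup hFG hG hγ hBadTopAbs hdiff.continuousAt

end Aux4

section Main
open Complex Filter Topology Finset

lemma gradL_eq_zero_of_not_diff {n : ℕ} {m : Fin n → ℝ} {κ : ℝ} {u : Fin n → ℂ} {j : Fin n}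
    (hnd : ¬DifferentiableAt ℝ (fun z : ℂ => Lag n m κ (Function.update u j z)) (u j)) :
    gradL n m κ u j = 0 := by
  simp only [gradL, fderiv_zero_of_not_differentiableAt hnd]
  simp

end Main

set_option maxHeartbeats 1000000 in
theorem aux_main
    (n : ℕ) (hn : 2 ≤ n) (m : Fin n → ℝ) (hm : ∀ j, 0 < m j)
    (κ α : ℝ) (u : Fin n → ℂ) (hu0 : u ≠ 0) (hu : Function.Injective u)
    (h : ∀ j, gradL n m κ u j + (α : ℂ) * (Complex.I * u j) = 0) :
    α = 0 ∧ gradL n m κ u = 0 := by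
  classical
  have hend : α = 0 → α = 0 ∧ gradL n m κ u = 0 := by
    intro hα
    refine ⟨hα, funext fun j => ?_⟩
    have hj := h j
    rw [hα] at hj
    simpa using hj
  have hα_of_j : ∀ j : Fin n, gradL n m κ u j = 0 → u j ≠ 0 → α = 0 := by
    intro j hg hj0
    have hj := h j
    rw [hg, zero_add] at hj
    rcases mul_eq_zero.1 hj with h1 | h2
    · exact_mod_cast h1
    · rcases mul_eq_zero.1 h2 with h3 | h4
      · exact absurd h3 Complex.I_ne_zero
      · exact absurd h4 hj0
  by_cases hA : ∀ i, 1 + κ * Complex.normSq (u i) ≠ 0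
  · by_cases hB : ∀ i k : Fin n, i ≠ k → (κ:ℂ) * (u i * (starRingEnd ℂ) (u k)) + 1 ≠ 0
    · -- regular case
      have hev : ∀ i : Fin n, DifferentiableAt ℝ (fun v : Fin n → ℂ => v i) u := fun i =>
        (ContinuousLinearMap.proj (R := ℝ) (φ := fun _ : Fin n => ℂ) i).differentiable.differentiableAt
      have hLd : DifferentiableAt ℝ (Lag n m κ) u := by
        have : DifferentiableAt ℝ (fun v : Fin n → ℂ =>
            (1 / 2 : ℝ) * ∑ i, m i * lamConf (v i) κ * ‖v i‖ ^ 2 +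
              ∑ i : Fin n, ∑ k ∈ Finset.Ioi i, m i * m k * Vpot (v i) (v k) κ) u := by
          refine DifferentiableAt.add ?_ ?_
          · refine (differentiableAt_const _).mul (DifferentiableAt.fun_sum fun i _ => ?_)
            exact differentiableAt_kin (hev i) κ (m i) (hA i)
          · refine DifferentiableAt.fun_sum fun i _ => DifferentiableAt.fun_sum fun k hk => ?_
            have hik : i ≠ k := ne_of_lt (Finset.mem_Ioi.1 hk)
            exact (differentiableAt_const _).mul
              (differentiableAt_Vpot (hev i) (hev k) κ (fun e => hik (hu e)) (hB i k hik))
        exact this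
      obtain ⟨D, hD⟩ : ∃ D, HasFDerivAt (Lag n m κ) D u := ⟨_, hLd.hasFDerivAt⟩
      -- partial derivatives
      have hpart : ∀ j : Fin n, D (Pi.single j 1) = α * (u j).im ∧
          D (Pi.single j Complex.I) = -(α * (u j).re) := by
        intro j
        have hupd : HasFDerivAt (Function.update u j)
            (ContinuousLinearMap.pi (Pi.single j (ContinuousLinearMap.id ℝ ℂ))) (u j) :=
          hasFDerivAt_update u (u j)
        have hLat' : HasFDerivAt (Lag n m κ) D (Function.update u j (u j)) := by
          rwa [Function.update_eq_self]
        have hcomp : HasFDerivAt (fun z : ℂ => Lag n m κ (Function.update u j z))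
            (D.comp (ContinuousLinearMap.pi (Pi.single j (ContinuousLinearMap.id ℝ ℂ))))
            (u j) := hLat'.comp (u j) hupd
        have hfd : fderiv ℝ (fun z : ℂ => Lag n m κ (Function.update u j z)) (u j)
            = D.comp (ContinuousLinearMap.pi (Pi.single j (ContinuousLinearMap.id ℝ ℂ))) :=
          hcomp.fderiv
        have hl : ∀ v : ℂ,
            (ContinuousLinearMap.pi (Pi.single j (ContinuousLinearMap.id ℝ ℂ))) v
              = (Pi.single j v : Fin n → ℂ) := by
          intro v
          ext i
          rcases eq_or_ne i j with rfl | hi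
          · simp [ContinuousLinearMap.pi_apply]
          · simp [ContinuousLinearMap.pi_apply, Pi.single_eq_of_ne hi]
        have hgj : gradL n m κ u j
            = ((D (Pi.single j 1) : ℝ) : ℂ) + ((D (Pi.single j Complex.I) : ℝ) : ℂ) * Complex.I := by
          simp only [gradL]
          rw [hfd]
          simp only [ContinuousLinearMap.coe_comp', Function.comp_apply]
          rw [hl 1, hl Complex.I]
        have hj := h j
        rw [hgj] at hj
        have hre := congrArg Complex.re hj
        have him := congrArg Complex.im hj
        simp only [Complex.add_re, Complex.add_im, Complex.ofReal_re, Complex.ofReal_im,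
          Complex.mul_re, Complex.mul_im, Complex.I_re, Complex.I_im, Complex.zero_re,
          Complex.zero_im] at hre him
        constructor <;> nlinarith [hre, him]
      -- rotational invariance kills the multiplier
      have hderiv : ∀ i : Fin n,
          HasDerivAt (fun θ : ℝ => Complex.exp ((θ:ℂ) * Complex.I) * u i) (Complex.I * u i) 0 := by
        intro i
        have h1 : HasDerivAt (fun θ : ℝ => (θ:ℂ)) 1 0 := by
          simpa using (hasDerivAt_id (0:ℝ)).ofReal_comp
        have h2 : HasDerivAt (fun θ : ℝ => (θ:ℂ) * Complex.I) Complex.I 0 := by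
          simpa using h1.mul_const Complex.I
        have h3 := h2.cexp
        have h4 := h3.mul_const (u i)
        simpa using h4
      have hc : HasDerivAt (fun θ : ℝ => fun i => Complex.exp ((θ:ℂ) * Complex.I) * u i)
          (fun i => Complex.I * u i) 0 := hasDerivAt_pi.2 hderiv
      have hu_eq : (fun i => Complex.exp (((0:ℝ):ℂ) * Complex.I) * u i) = u := by
        funext i; simp
      have hLag0 : HasFDerivAt (Lag n m κ) D
          (fun i => Complex.exp (((0:ℝ):ℂ) * Complex.I) * u i) := by
        rw [hu_eq]; exact hD
      have hcomp2 : HasDerivAt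
          (fun θ : ℝ => Lag n m κ (fun i => Complex.exp ((θ:ℂ) * Complex.I) * u i))
          (D (fun i => Complex.I * u i)) 0 :=
          hLag0.comp_hasDerivAt (f := fun θ : ℝ => fun i => Complex.exp ((θ:ℂ) * Complex.I) * u i) 0 hc
      have hconst : (fun θ : ℝ => Lag n m κ (fun i => Complex.exp ((θ:ℂ) * Complex.I) * u i))
          = fun _ => Lag n m κ u := by
        funext θ
        refine Lag_rot n m κ u _ ?_
        rw [Complex.mul_conj]
        norm_cast
        rw [← Complex.sq_norm, Complex.norm_exp_ofReal_mul_I]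
        norm_num
      have hzero : D (fun i => Complex.I * u i) = 0 := by
        have h5 := hcomp2
        rw [hconst] at h5
        exact h5.unique (hasDerivAt_const 0 _)
      have hDsum : D (fun i => Complex.I * u i) = ∑ i, D (Pi.single i (Complex.I * u i)) := by
        conv_lhs => rw [show (fun i => Complex.I * u i)
          = ∑ i : Fin n, Pi.single i (Complex.I * u i) from (Finset.univ_sum_single _).symm]
        rw [map_sum]
      have hterm : ∀ i : Fin n, D (Pi.single i (Complex.I * u i))
          = -(α * Complex.normSq (u i)) := by
        intro i
        have hdec : (Pi.single i (Complex.I * u i) : Fin n → ℂ)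
            = (-(u i).im) • (Pi.single i (1:ℂ) : Fin n → ℂ)
              + (u i).re • (Pi.single i Complex.I : Fin n → ℂ) := by
          funext l
          rcases eq_or_ne l i with rfl | hl
          · simp only [Pi.single_eq_same, Pi.add_apply, Pi.smul_apply, Complex.real_smul,
              smul_eq_mul, mul_one]
            apply Complex.ext <;> simp
          · simp [Pi.single_eq_of_ne hl]
        rw [hdec, map_add, map_smul, map_smul, (hpart i).1, (hpart i).2, smul_eq_mul,
          smul_eq_mul, Complex.normSq_apply]
        ring
      have hsum0 : α * ∑ i, Complex.normSq (u i) = 0 := by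
        have h6 := hzero
        rw [hDsum] at h6
        have h7 : ∑ i, D (Pi.single i (Complex.I * u i))
            = -(α * ∑ i, Complex.normSq (u i)) := by
          rw [Finset.mul_sum, ← Finset.sum_neg_distrib]
          exact Finset.sum_congr rfl fun i _ => hterm i
        rw [h7] at h6
        linarith
      have hpos : 0 < ∑ i, Complex.normSq (u i) := by
        obtain ⟨i, hi0⟩ := Function.ne_iff.1 hu0
        refine Finset.sum_pos' (fun i _ => Complex.normSq_nonneg _) ⟨i, Finset.mem_univ i, ?_⟩
        exact Complex.normSq_pos.2 hi0
      exact hend ((mul_eq_zero.1 hsum0).resolve_right (ne_of_gt hpos))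
    · push_neg at hB
      obtain ⟨i, k, hik, hsing⟩ := hB
      have hnd := notdiff_pair hm hu hik hsing
      have hg := gradL_eq_zero_of_not_diff hnd
      have hi0 : u i ≠ 0 := by
        rintro h0; rw [h0] at hsing; simp at hsing
      exact hend (hα_of_j i hg hi0)
  · push_neg at hA
    obtain ⟨i, hks⟩ := hA
    have hnd := notdiff_kin hm hu hks
    have hg := gradL_eq_zero_of_not_diff hnd
    have hi0 : u i ≠ 0 := by
      rintro h0; rw [h0] at hks; simp at hks
    exact hend (hα_of_j i hg hi0)

/-- Every zero of the augmented map with nonzero configuration is a genuine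
relative equilibrium: the Lagrange multiplier vanishes. -/
theorem augmented_map_zero_is_relative_equilibrium
    (n : ℕ) (hn : 2 ≤ n) (m : Fin n → ℝ) (hm : ∀ j, 0 < m j)
    (κ α : ℝ) (u : Fin n → ℂ) (hu0 : u ≠ 0) (hu : Function.Injective u)
    (h : ∀ j, gradL n m κ u j + (α : ℂ) * (Complex.I * u j) = 0) :
    α = 0 ∧ gradL n m κ u = 0 :=
  aux_main n hn m hm κ α u hu0 hu h
end

section
/- Let n ≥ 2 and m₁, …, mₙ > 0, let a ∈ ℂⁿ be a non-degenerate central configuration (pairwise distinct components, ∇L(a; 0) = 0, and the kernel of the Hessian D²L(a; 0) is exactly the real line spanned by 𝒥a = (i·a₁, …, i·aₙ)), and let e ∈ ℂⁿ satisfy Re⟨e, 𝒥a⟩ ≠ 0. Define the augmented map F(u, α; κ) = (∇L(u; κ) + α·𝒥u, Re⟨u − a, e⟩) with values in ℂⁿ × ℝ. Then there exist κ₀ > 0, a neighborhood W of (a, 0) in ℂⁿ × ℝ, and a continuous map κ ↦ (u(κ), α(κ)) on (−κ₀, κ₀) with (u(0), α(0)) = (a, 0) such that for each |κ| < κ₀,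 (u(κ), α(κ)) is the unique point of W satisfying F(u(κ), α(κ); κ) = 0; that is, the augmented map has a unique continuation of solutions starting from (a, 0). -/
open scoped BigOperators

/-- Augmented map `F(u, α; κ) = (∇L(u; κ) + α 𝒥u, Re⟪u − a, e⟫)` used for the
numerical continuation of relative equilibria. -/
noncomputable def Faug (n : ℕ) (m : Fin n → ℝ) (a e : Fin n → ℂ) (κ : ℝ)
    (p : (Fin n → ℂ) × ℝ) : (Fin n → ℂ) × ℝ :=
  (fun j => gradL n m κ p.1 j + (p.2 : ℂ) * (Complex.I * p.1 j),
    ∑ j, ((p.1 j - a j) * (starRingEnd ℂ) (e j)).re)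


open Complex

set_option maxHeartbeats 1000000

lemma contDiff_abs_sq : ContDiff ℝ 2 (fun z : ℂ => ‖z‖ ^ 2) := by
  have h : (fun z : ℂ => ‖z‖ ^ 2) = fun z : ℂ => z.re ^ 2 + z.im ^ 2 := by
    funext z; rw [Complex.sq_norm, Complex.normSq_apply]; ring
  rw [h]
  exact (Complex.reCLM.contDiff.pow 2).add (Complex.imCLM.contDiff.pow 2)

lemma contDiff_rere : ContDiff ℝ 2 (fun p : ℂ × ℂ => (p.1 * (starRingEnd ℂ) p.2).re) := by
  exact Complex.reCLM.contDiff.comp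
    (contDiff_fst.mul (Complex.conjCLE.toContinuousLinearMap.contDiff.comp contDiff_snd))

lemma contDiffAt_lam {q : ℝ × ℂ} (h : (1 + q.1 * ‖q.2‖ ^ 2) ≠ 0) :
    ContDiffAt ℝ 2 (fun p : ℝ × ℂ => lamConf p.2 p.1) q := by
  unfold lamConf
  apply ContDiffAt.div contDiffAt_const
  · exact (((contDiff_const.add (contDiff_fst.mul
      (contDiff_abs_sq.comp contDiff_snd))).pow 2)).contDiffAt
  · exact pow_ne_zero _ h

lemma contDiffAt_Vpot_s13 {q : ℝ × ℂ × ℂ} (hzw : q.2.1 ≠ q.2.2)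
    (hQ : 0 < q.1 ^ 2 * ‖q.2.1‖ ^ 2 * ‖q.2.2‖ ^ 2 +
      2 * q.1 * (q.2.1 * (starRingEnd ℂ) q.2.2).re + 1) :
    ContDiffAt ℝ 2 (fun p : ℝ × ℂ × ℂ => Vpot p.2.1 p.2.2 p.1) q := by
  unfold Vpot
  have hre : ContDiff ℝ 2 (fun p : ℝ × ℂ × ℂ => (p.2.1 * (starRingEnd ℂ) p.2.2).re) :=
    contDiff_rere.comp contDiff_snd
  have hA1 : ContDiff ℝ 2 (fun p : ℝ × ℂ × ℂ => ‖p.2.1‖ ^ 2) :=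
    contDiff_abs_sq.comp (contDiff_fst.comp contDiff_snd)
  have hA2 : ContDiff ℝ 2 (fun p : ℝ × ℂ × ℂ => ‖p.2.2‖ ^ 2) :=
    contDiff_abs_sq.comp (contDiff_snd.comp contDiff_snd)
  have hQs : ContDiff ℝ 2 (fun p : ℝ × ℂ × ℂ =>
      p.1 ^ 2 * ‖p.2.1‖ ^ 2 * ‖p.2.2‖ ^ 2 +
        2 * p.1 * (p.2.1 * (starRingEnd ℂ) p.2.2).re + 1) :=
    ((((contDiff_fst.pow 2).mul hA1).mul hA2).add
      ((contDiff_const.mul contDiff_fst).mul hre)).add contDiff_const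
  have hnum : ContDiff ℝ 2 (fun p : ℝ × ℂ × ℂ =>
      4 * p.1 * (p.2.1 * (starRingEnd ℂ) p.2.2).re +
        (p.1 * ‖p.2.2‖ ^ 2 - 1) * (p.1 * ‖p.2.1‖ ^ 2 - 1)) :=
    (((contDiff_const.mul contDiff_fst).mul hre).add
      (((contDiff_fst.mul hA2).sub contDiff_const).mul
        ((contDiff_fst.mul hA1).sub contDiff_const)))
  have habs : ContDiffAt ℝ 2 (fun p : ℝ × ℂ × ℂ => ‖p.2.1 - p.2.2‖) q := by
    have h1 : ContDiffAt ℝ 2 (fun p : ℝ × ℂ × ℂ => ‖p.2.1 - p.2.2‖) q := by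
      refine ContDiffAt.norm ℝ ?_ (sub_ne_zero.mpr hzw)
      exact ((contDiff_fst.comp contDiff_snd).sub (contDiff_snd.comp contDiff_snd)).contDiffAt
    exact h1
  have hsqrt : ContDiffAt ℝ 2 (fun p : ℝ × ℂ × ℂ =>
      Real.sqrt (p.1 ^ 2 * ‖p.2.1‖ ^ 2 * ‖p.2.2‖ ^ 2 +
        2 * p.1 * (p.2.1 * (starRingEnd ℂ) p.2.2).re + 1)) q :=
    hQs.contDiffAt.sqrt hQ.ne'
  refine hnum.contDiffAt.div (((contDiffAt_const.mul habs)).mul hsqrt) ?_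
  apply mul_ne_zero (mul_ne_zero two_ne_zero ?_) ?_
  · exact (norm_ne_zero_iff.mpr (sub_ne_zero.mpr hzw))
  · exact (Real.sqrt_pos.mpr hQ).ne'

/-- The open set where the Lagrangian is smooth. -/
def good (n : ℕ) : Set (ℝ × (Fin n → ℂ)) :=
  {q | (∀ j k : Fin n, j ≠ k → q.2 j ≠ q.2 k) ∧
    (∀ j, (1 + q.1 * ‖q.2 j‖ ^ 2) ≠ 0) ∧
    ∀ j k : Fin n, 0 < q.1 ^ 2 * ‖q.2 j‖ ^ 2 * ‖q.2 k‖ ^ 2 +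
      2 * q.1 * (q.2 j * (starRingEnd ℂ) (q.2 k)).re + 1}

lemma cont_coord {n : ℕ} (j : Fin n) : Continuous (fun q : ℝ × (Fin n → ℂ) => q.2 j) :=
  (continuous_apply j).comp continuous_snd

lemma isOpen_good (n : ℕ) : IsOpen (good n) := by
  have h1 : IsOpen {q : ℝ × (Fin n → ℂ) | ∀ j k : Fin n, j ≠ k → q.2 j ≠ q.2 k} := by
    have : {q : ℝ × (Fin n → ℂ) | ∀ j k : Fin n, j ≠ k → q.2 j ≠ q.2 k} =
        ⋂ j, ⋂ k, {q : ℝ × (Fin n → ℂ) | j ≠ k → q.2 j ≠ q.2 k} := by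
      ext q; simp [Set.mem_iInter]
    rw [this]
    refine isOpen_iInter_of_finite fun j => isOpen_iInter_of_finite fun k => ?_
    by_cases hjk : j = k
    · simp [hjk]
    · have : {q : ℝ × (Fin n → ℂ) | j ≠ k → q.2 j ≠ q.2 k} =
          {q : ℝ × (Fin n → ℂ) | q.2 j ≠ q.2 k} := by ext q; simp [hjk]
      rw [this]
      exact isOpen_ne_fun (cont_coord j) (cont_coord k)
  have h2 : IsOpen {q : ℝ × (Fin n → ℂ) |
      ∀ j, (1 + q.1 * ‖q.2 j‖ ^ 2) ≠ 0} := by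
    have : {q : ℝ × (Fin n → ℂ) | ∀ j, (1 + q.1 * ‖q.2 j‖ ^ 2) ≠ 0} =
        ⋂ j, {q : ℝ × (Fin n → ℂ) | (1 + q.1 * ‖q.2 j‖ ^ 2) ≠ 0} := by
      ext q; simp [Set.mem_iInter]
    rw [this]
    refine isOpen_iInter_of_finite fun j => ?_
    have : Continuous (fun q : ℝ × (Fin n → ℂ) => 1 + q.1 * ‖q.2 j‖ ^ 2) :=
      continuous_const.add (continuous_fst.mul
        ((continuous_norm.comp (cont_coord j)).pow 2))
    exact isOpen_ne_fun this continuous_const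
  have h3 : IsOpen {q : ℝ × (Fin n → ℂ) |
      ∀ j k : Fin n, 0 < q.1 ^ 2 * ‖q.2 j‖ ^ 2 * ‖q.2 k‖ ^ 2 +
        2 * q.1 * (q.2 j * (starRingEnd ℂ) (q.2 k)).re + 1} := by
    have : {q : ℝ × (Fin n → ℂ) |
        ∀ j k : Fin n, 0 < q.1 ^ 2 * ‖q.2 j‖ ^ 2 * ‖q.2 k‖ ^ 2 +
          2 * q.1 * (q.2 j * (starRingEnd ℂ) (q.2 k)).re + 1} =
        ⋂ j, ⋂ k, {q : ℝ × (Fin n → ℂ) |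
          0 < q.1 ^ 2 * ‖q.2 j‖ ^ 2 * ‖q.2 k‖ ^ 2 +
            2 * q.1 * (q.2 j * (starRingEnd ℂ) (q.2 k)).re + 1} := by
      ext q; simp [Set.mem_iInter]
    rw [this]
    refine isOpen_iInter_of_finite fun j => isOpen_iInter_of_finite fun k => ?_
    apply isOpen_lt continuous_const
    have hre : Continuous (fun q : ℝ × (Fin n → ℂ) => (q.2 j * (starRingEnd ℂ) (q.2 k)).re) := by
      exact Complex.continuous_re.comp ((cont_coord j).mul (Complex.continuous_conj.comp (cont_coord k)))
    exact ((((continuous_fst.pow 2).mul ((continuous_norm.comp (cont_coord j)).pow 2)).mul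
      ((continuous_norm.comp (cont_coord k)).pow 2)).add
      ((continuous_const.mul continuous_fst).mul hre)).add continuous_const
  exact h1.inter (h2.inter h3)

lemma contDiffAt_LagP (n : ℕ) (m : Fin n → ℝ) {q : ℝ × (Fin n → ℂ)} (hq : q ∈ good n) :
    ContDiffAt ℝ 2 (fun q : ℝ × (Fin n → ℂ) => Lag n m q.1 q.2) q := by
  obtain ⟨hne, hden, hQ⟩ := hq
  unfold Lag
  apply ContDiffAt.add
  · apply ContDiffAt.mul contDiffAt_const
    apply ContDiffAt.sum
    intro j _
    have hc : ContDiffAt ℝ 2 (fun p : ℝ × (Fin n → ℂ) => (p.1, p.2 j)) q :=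
      (contDiff_fst.prodMk ((ContinuousLinearMap.proj j :
        (Fin n → ℂ) →L[ℝ] ℂ).contDiff.comp contDiff_snd)).contDiffAt
    have hl : ContDiffAt ℝ 2 (fun p : ℝ × (Fin n → ℂ) => lamConf (p.2 j) p.1) q :=
      (contDiffAt_lam (hden j)).comp q hc
    have ha : ContDiffAt ℝ 2 (fun p : ℝ × (Fin n → ℂ) => ‖p.2 j‖ ^ 2) q :=
      (contDiff_abs_sq.comp ((ContinuousLinearMap.proj j :
        (Fin n → ℂ) →L[ℝ] ℂ).contDiff.comp contDiff_snd)).contDiffAt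
    exact (contDiffAt_const.mul hl).mul ha
  · apply ContDiffAt.sum
    intro j _
    apply ContDiffAt.sum
    intro k hk
    have hjk : j ≠ k := by
      have := Finset.mem_Ioi.mp hk
      exact (ne_of_lt this)
    have hc : ContDiffAt ℝ 2 (fun p : ℝ × (Fin n → ℂ) => (p.1, (p.2 j, p.2 k))) q :=
      (contDiff_fst.prodMk (((ContinuousLinearMap.proj j :
        (Fin n → ℂ) →L[ℝ] ℂ).contDiff.comp contDiff_snd).prodMk
        ((ContinuousLinearMap.proj k : (Fin n → ℂ) →L[ℝ] ℂ).contDiff.comp contDiff_snd))).contDiffAt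
    exact contDiffAt_const.mul ((contDiffAt_Vpot_s13 (hne j k hjk) (hQ j k)).comp q hc)

attribute [local irreducible] Lag

/-- Partial derivative of `Lag` in the configuration variable, as a family. -/
noncomputable def g1 (n : ℕ) (m : Fin n → ℝ) (q : ℝ × (Fin n → ℂ)) : (Fin n → ℂ) →L[ℝ] ℝ :=
  fderiv ℝ (fun u => Lag n m q.1 u) q.2

/-- Converts a real linear functional on `ℂⁿ` into its gradient vector. -/
noncomputable def cL (n : ℕ) : ((Fin n → ℂ) →L[ℝ] ℝ) →L[ℝ] (Fin n → ℂ) :=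
  ContinuousLinearMap.pi fun j =>
    (ContinuousLinearMap.apply ℝ ℝ (Pi.single j (1 : ℂ))).smulRight (1 : ℂ) +
      (ContinuousLinearMap.apply ℝ ℝ (Pi.single j Complex.I)).smulRight Complex.I

lemma cL_apply (n : ℕ) (T : (Fin n → ℂ) →L[ℝ] ℝ) (j : Fin n) :
    cL n T j = (T (Pi.single j 1) : ℝ) + (T (Pi.single j Complex.I) : ℝ) * Complex.I := by
  simp only [cL, ContinuousLinearMap.pi_apply, ContinuousLinearMap.add_apply,
    ContinuousLinearMap.smulRight_apply, ContinuousLinearMap.apply_apply]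
  rw [Complex.real_smul, Complex.real_smul, mul_one]

lemma contDiffAt_Lag_u (n : ℕ) (m : Fin n → ℝ) {q : ℝ × (Fin n → ℂ)} (hq : q ∈ good n) :
    ContDiffAt ℝ 2 (fun u => Lag n m q.1 u) q.2 := by
  have h : ContDiffAt ℝ 2 (fun u : Fin n → ℂ => (q.1, u)) q.2 :=
    (contDiff_const.prodMk contDiff_id).contDiffAt
  exact ContDiffAt.comp (g := fun q : ℝ × (Fin n → ℂ) => Lag n m q.1 q.2) q.2 (contDiffAt_LagP n m hq) h

lemma hasFDerivAt_Lag_u (n : ℕ) (m : Fin n → ℝ) {q : ℝ × (Fin n → ℂ)} (hq : q ∈ good n) :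
    HasFDerivAt (fun u => Lag n m q.1 u) (g1 n m q) q.2 :=
  ((contDiffAt_Lag_u n m hq).differentiableAt (by norm_num)).hasFDerivAt

lemma piCLM_apply {n : ℕ} (j : Fin n) (y : ℂ) :
    (ContinuousLinearMap.pi
      (Pi.single j (ContinuousLinearMap.id ℝ ℂ) : ∀ _ : Fin n, ℂ →L[ℝ] ℂ)) y
      = Pi.single j y := by
  funext k
  simp only [ContinuousLinearMap.pi_apply]
  rcases eq_or_ne k j with h | h
  · subst h; simp
  · simp [Pi.single_apply, h]

/-- On the good set, `gradL` equals `cL ∘ g1`. -/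
lemma gradL_eq_s13 (n : ℕ) (m : Fin n → ℝ) {q : ℝ × (Fin n → ℂ)} (hq : q ∈ good n) :
    gradL n m q.1 q.2 = cL n (g1 n m q) := by
  funext j
  have hupd : HasFDerivAt (Function.update q.2 j)
      (ContinuousLinearMap.pi (Pi.single j (ContinuousLinearMap.id ℝ ℂ))) (q.2 j) :=
    hasFDerivAt_update q.2 (q.2 j)
  have hL : HasFDerivAt (fun u => Lag n m q.1 u) (g1 n m q) (Function.update q.2 j (q.2 j)) := by
    rw [Function.update_eq_self]
    exact hasFDerivAt_Lag_u n m hq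
  have hcomp : HasFDerivAt (fun z : ℂ => Lag n m q.1 (Function.update q.2 j z))
      ((g1 n m q).comp (ContinuousLinearMap.pi (Pi.single j (ContinuousLinearMap.id ℝ ℂ))))
      (q.2 j) := hL.comp (q.2 j) hupd
  have hfd := hcomp.fderiv
  rw [gradL, hfd, cL_apply]
  simp only [ContinuousLinearMap.coe_comp', Function.comp_apply]
  rw [piCLM_apply, piCLM_apply]

/-- `g1` is `C¹` on the good set. -/
lemma contDiffAt_g1 (n : ℕ) (m : Fin n → ℝ) {q : ℝ × (Fin n → ℂ)} (hq : q ∈ good n) :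
    ContDiffAt ℝ 1 (g1 n m) q := by
  have h := ContDiffAt.fderiv (𝕜 := ℝ)
    (f := fun (x : ℝ × (Fin n → ℂ)) (u : Fin n → ℂ) => Lag n m x.1 u)
    (g := fun x : ℝ × (Fin n → ℂ) => x.2) (n := 2) (m := 1) (x₀ := q)
    ?_ contDiffAt_snd (by norm_num)
  · exact h
  · have hc : ContDiff ℝ 2 (fun p : (ℝ × (Fin n → ℂ)) × (Fin n → ℂ) => (p.1.1, p.2)) :=
      (contDiff_fst.fst.prodMk contDiff_snd)
    exact (contDiffAt_LagP n m hq).comp (q, q.2) hc.contDiffAt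

/-- The augmented map has a unique continuation of solutions starting from the
non-degenerate central configuration `(a, 0)`. -/
theorem augmented_map_unique_continuation
    (n : ℕ) (hn : 2 ≤ n) (m : Fin n → ℝ) (hm : ∀ j, 0 < m j)
    (a : Fin n → ℂ) (ha : Function.Injective a)
    (hcrit : gradL n m 0 a = 0)
    (hnondeg : ∀ v : Fin n → ℂ,
      (fderiv ℝ (fun u : Fin n → ℂ => fderiv ℝ (fun w : Fin n → ℂ => Lag n m 0 w) u) a) v = 0 ↔
        ∃ t : ℝ, v = t • fun j => Complex.I * a j)
    (e : Fin n → ℂ) (he : ∑ j, (e j * (starRingEnd ℂ) (Complex.I * a j)).re ≠ 0) :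
    ∃ κ₀ > (0 : ℝ), ∃ W ∈ nhds ((a, 0) : (Fin n → ℂ) × ℝ),
      ∃ φ : ℝ → (Fin n → ℂ) × ℝ,
        ContinuousOn φ (Set.Ioo (-κ₀) κ₀) ∧ φ 0 = (a, 0) ∧
          ∀ κ : ℝ, |κ| < κ₀ →
            φ κ ∈ W ∧ Faug n m a e κ (φ κ) = 0 ∧
              ∀ p ∈ W, Faug n m a e κ p = 0 → p = φ κ := by

  classical
  -- the point and ambient space
  set E := ℝ × ((Fin n → ℂ) × ℝ)
  set x₀ : E := ((0 : ℝ), (a, (0 : ℝ))) with hx₀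
  have h0a : ((0 : ℝ), a) ∈ good n := by
    refine ⟨fun j k h hh => h (ha hh), ?_, ?_⟩
    · intro j; norm_num
    · intro j k; norm_num
  -- first and second derivative data
  have hg1C : ContDiffAt ℝ 1 (g1 n m) ((0 : ℝ), a) := contDiffAt_g1 n m h0a
  have hg1D : HasFDerivAt (g1 n m) (fderiv ℝ (g1 n m) ((0 : ℝ), a)) ((0 : ℝ), a) :=
    (hg1C.differentiableAt one_ne_zero).hasFDerivAt
  set T := fderiv ℝ (g1 n m) ((0 : ℝ), a) with hT
  set H₀ := T.comp (ContinuousLinearMap.inr ℝ ℝ (Fin n → ℂ)) with hH₀def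
  have hH₀ : HasFDerivAt (fun u => g1 n m ((0 : ℝ), u)) H₀ a :=
    hg1D.comp a (ContinuousLinearMap.inr ℝ ℝ (Fin n → ℂ)).hasFDerivAt
  have hnon : ∀ v : Fin n → ℂ, H₀ v = 0 ↔ ∃ t : ℝ, v = t • fun j => Complex.I * a j := by
    intro v
    have e1 : (fun u : Fin n → ℂ => fderiv ℝ (fun w : Fin n → ℂ => Lag n m 0 w) u) =
        fun u => g1 n m ((0 : ℝ), u) := rfl
    have e2 : fderiv ℝ (fun u : Fin n → ℂ => fderiv ℝ (fun w : Fin n → ℂ => Lag n m 0 w) u) a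
        = H₀ := by rw [e1]; exact hH₀.fderiv
    rw [← e2]; exact hnondeg v
  have hsymm : ∀ v w, H₀ v w = H₀ w v := by
    intro v w
    refine second_derivative_symmetric_of_eventually
      (f := fun u => Lag n m 0 u) (f' := fun u => g1 n m ((0 : ℝ), u)) ?_ hH₀ v w
    have hS : IsOpen {u : Fin n → ℂ | ((0 : ℝ), u) ∈ good n} :=
      (isOpen_good n).preimage (continuous_const.prodMk continuous_id)
    filter_upwards [hS.mem_nhds h0a] with y hy
    exact hasFDerivAt_Lag_u n m hy
  -- pairing identity
  have hsingle : ∀ (w : Fin n → ℂ) (j : Fin n),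
      (Pi.single j (w j) : Fin n → ℂ) = (w j).re • (Pi.single j (1 : ℂ) : Fin n → ℂ) + (w j).im • (Pi.single j Complex.I : Fin n → ℂ) := by
    intro w j
    funext k
    rcases eq_or_ne k j with h | h
    · subst h
      simp only [Pi.single_eq_same, Pi.add_apply, Pi.smul_apply, Complex.real_smul, mul_one]
      exact (Complex.re_add_im (w k)).symm
    · simp [Pi.single_eq_of_ne h]
  have hpair : ∀ (T' : (Fin n → ℂ) →L[ℝ] ℝ) (w : Fin n → ℂ),
      ∑ j, (cL n T' j * (starRingEnd ℂ) (w j)).re = T' w := by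
    intro T' w
    have hterm : ∀ j, (cL n T' j * (starRingEnd ℂ) (w j)).re = T' (Pi.single j (w j)) := by
      intro j
      rw [cL_apply, hsingle w j, map_add, map_smul, map_smul]
      simp [Complex.mul_re, Complex.add_re, Complex.add_im, Complex.mul_im,
        smul_eq_mul]
      ring
    rw [Finset.sum_congr rfl fun j _ => hterm j, ← map_sum, Finset.univ_sum_single]
  have hcLinj : ∀ T' : (Fin n → ℂ) →L[ℝ] ℝ, cL n T' = 0 → T' = 0 := by
    intro T' h
    ext w
    have := hpair T' w
    rw [h] at this
    simpa using this.symm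
  -- the continuous linear maps
  set P : E →L[ℝ] ℝ × (Fin n → ℂ) :=
    (ContinuousLinearMap.fst ℝ ℝ ((Fin n → ℂ) × ℝ)).prod
      ((ContinuousLinearMap.fst ℝ (Fin n → ℂ) ℝ).comp
        (ContinuousLinearMap.snd ℝ ℝ ((Fin n → ℂ) × ℝ))) with hP
  set R : E →L[ℝ] (Fin n → ℂ) :=
    ((ContinuousLinearMap.snd ℝ (Fin n → ℂ) ℝ).comp
      (ContinuousLinearMap.snd ℝ ℝ ((Fin n → ℂ) × ℝ))).smulRight
      (fun j => Complex.I * a j) with hR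
  set ℓ : (Fin n → ℂ) →L[ℝ] ℝ :=
    ∑ j, Complex.reCLM.comp (((ContinuousLinearMap.mul ℝ ℂ).flip
      ((starRingEnd ℂ) (e j))).comp (ContinuousLinearMap.proj j)) with hℓ
  have hℓ_apply : ∀ v : Fin n → ℂ, ℓ v = ∑ j, (v j * (starRingEnd ℂ) (e j)).re := by
    intro v
    rw [hℓ]
    simp [ContinuousLinearMap.sum_apply]
    exact Finset.sum_congr rfl fun j _ => by ring
  set ℓ2 : E →L[ℝ] ℝ := ℓ.comp ((ContinuousLinearMap.fst ℝ (Fin n → ℂ) ℝ).comp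
    (ContinuousLinearMap.snd ℝ ℝ ((Fin n → ℂ) × ℝ))) with hℓ2
  set A : E →L[ℝ] E := (ContinuousLinearMap.fst ℝ ℝ ((Fin n → ℂ) × ℝ)).prod
    ((((cL n).comp (T.comp P)) + R).prod ℓ2) with hA
  -- the augmented map with parameter
  set G : E → E := fun q => (q.1, Faug n m a e q.1 q.2) with hG
  set Ggood : E → E := fun q =>
    (q.1, (cL n (g1 n m (q.1, q.2.1)) + fun j => ((q.2.2 : ℝ) : ℂ) * (Complex.I * q.2.1 j),
      ∑ j, ((q.2.1 j - a j) * (starRingEnd ℂ) (e j)).re)) with hGgood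
  have hU' : IsOpen {q : E | (q.1, q.2.1) ∈ good n} :=
    (isOpen_good n).preimage (continuous_fst.prodMk (continuous_fst.comp continuous_snd))
  have hx₀U' : x₀ ∈ {q : E | (q.1, q.2.1) ∈ good n} := h0a
  have hGG : G =ᶠ[nhds x₀] Ggood := by
    filter_upwards [hU'.mem_nhds hx₀U'] with q hq
    rw [hG, hGgood]
    refine Prod.ext rfl (Prod.ext ?_ rfl)
    show (fun j => gradL n m q.1 q.2.1 j + ((q.2.2 : ℝ) : ℂ) * (Complex.I * q.2.1 j)) = _
    funext j
    have := gradL_eq_s13 n m (q := (q.1, q.2.1)) hq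
    simp only [Pi.add_apply]
    rw [show gradL n m q.1 q.2.1 j = cL n (g1 n m (q.1, q.2.1)) j from congrFun this j]
  -- smoothness of Ggood at x₀
  have hprojC : ∀ j : Fin n, ContDiff ℝ 1 (fun q : E => q.2.1 j) := fun j =>
    (ContinuousLinearMap.proj j : (Fin n → ℂ) →L[ℝ] ℂ).contDiff.comp contDiff_snd.fst
  have hGgoodC : ContDiffAt ℝ 1 Ggood x₀ := by
    rw [hGgood]
    refine contDiffAt_fst.prodMk (ContDiffAt.prodMk ?_ ?_)
    · refine ContDiffAt.add ?_ ?_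
      · exact (cL n).contDiff.contDiffAt.comp x₀ (hg1C.comp x₀
          (contDiff_fst.prodMk contDiff_snd.fst).contDiffAt)
      · refine (contDiff_pi.mpr fun j => ?_).contDiffAt
        exact (Complex.ofRealCLM.contDiff.comp contDiff_snd.snd).mul
          (contDiff_const.mul (hprojC j))
    · exact (ContDiff.sum fun j _ => Complex.reCLM.contDiff.comp
        (((hprojC j).sub contDiff_const).mul contDiff_const)).contDiffAt
  -- derivative of Ggood at x₀
  have hGgoodD : HasFDerivAt Ggood A x₀ := by
    rw [hGgood, hA]
    refine (hasFDerivAt_fst).prodMk (HasFDerivAt.prodMk ?_ ?_)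
    · refine HasFDerivAt.add ?_ ?_
      · exact (cL n).hasFDerivAt.comp x₀ (by have h := hg1D.comp x₀ P.hasFDerivAt; exact h)
      · rw [hasFDerivAt_pi']
        intro j
        have hc : HasFDerivAt (fun q : E => ((q.2.2 : ℝ) : ℂ))
            (Complex.ofRealCLM.comp ((ContinuousLinearMap.snd ℝ (Fin n → ℂ) ℝ).comp
              (ContinuousLinearMap.snd ℝ ℝ ((Fin n → ℂ) × ℝ)))) x₀ :=
          (Complex.ofRealCLM.comp ((ContinuousLinearMap.snd ℝ (Fin n → ℂ) ℝ).comp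
            (ContinuousLinearMap.snd ℝ ℝ ((Fin n → ℂ) × ℝ)))).hasFDerivAt
        have hd : HasFDerivAt (fun q : E => Complex.I * q.2.1 j)
            ((ContinuousLinearMap.mul ℝ ℂ Complex.I).comp
              ((ContinuousLinearMap.proj j).comp ((ContinuousLinearMap.fst ℝ (Fin n → ℂ) ℝ).comp
                (ContinuousLinearMap.snd ℝ ℝ ((Fin n → ℂ) × ℝ))))) x₀ :=
          ((ContinuousLinearMap.mul ℝ ℂ Complex.I).comp
            ((ContinuousLinearMap.proj j).comp ((ContinuousLinearMap.fst ℝ (Fin n → ℂ) ℝ).comp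
              (ContinuousLinearMap.snd ℝ ℝ ((Fin n → ℂ) × ℝ))))).hasFDerivAt
        have hmul := hc.mul hd
        refine hmul.congr_fderiv ?_
        refine ContinuousLinearMap.ext fun q => ?_
        simp only [hR, hx₀, ContinuousLinearMap.coe_comp', Function.comp_apply,
          ContinuousLinearMap.proj_apply, ContinuousLinearMap.smulRight_apply,
          ContinuousLinearMap.coe_snd', ContinuousLinearMap.coe_fst',
          ContinuousLinearMap.add_apply, ContinuousLinearMap.smul_apply,
          Complex.ofRealCLM_apply, ContinuousLinearMap.mul_apply',
          Complex.ofReal_zero, zero_smul, zero_mul, smul_eq_mul, zero_add]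
        rw [Pi.smul_apply, Complex.real_smul]
        ring
    · have key : (fun q : E => ∑ j, ((q.2.1 j - a j) * (starRingEnd ℂ) (e j)).re) =
          fun q : E => ℓ q.2.1 - ∑ j, (a j * (starRingEnd ℂ) (e j)).re := by
        funext q
        rw [hℓ_apply, ← Finset.sum_sub_distrib]
        exact Finset.sum_congr rfl fun j _ => by rw [sub_mul, Complex.sub_re]
      rw [key]
      exact ℓ2.hasFDerivAt.sub_const _
  have hGD : HasFDerivAt G A x₀ := hGgoodD.congr_of_eventuallyEq hGG
  have hGC : ContDiffAt ℝ 1 G x₀ := hGgoodC.congr_of_eventuallyEq hGG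
  -- injectivity of the derivative
  have hJa0 : H₀ (fun j => Complex.I * a j) = 0 := (hnon _).mpr ⟨1, (one_smul _ _).symm⟩
  have hsum_pos : 0 < ∑ j, Complex.normSq (a j) := by
    have hane : ∃ j, a j ≠ 0 := by
      by_contra h
      push_neg at h
      have h01 : (⟨0, by omega⟩ : Fin n) = ⟨1, by omega⟩ := ha (by rw [h, h])
      simp [Fin.ext_iff] at h01
    obtain ⟨j, hj⟩ := hane
    refine Finset.sum_pos' (fun k _ => Complex.normSq_nonneg _)
      ⟨j, Finset.mem_univ j, Complex.normSq_pos.mpr hj⟩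
  have hres : ∀ z w : ℂ, (z * (starRingEnd ℂ) w).re = (w * (starRingEnd ℂ) z).re := by
    intro z w; simp [Complex.mul_re]; ring
  have hℓJa : ℓ (fun j => Complex.I * a j) ≠ 0 := by
    rw [hℓ_apply]
    intro h0
    apply he
    rw [← h0]
    exact Finset.sum_congr rfl fun j _ => hres (e j) (Complex.I * a j)
  have hAinj0 : ∀ x : E, A x = 0 → x = 0 := by
    rintro ⟨δ, v, β⟩ hx
    have hx1 : δ = 0 := congrArg Prod.fst hx
    have hx2 : cL n (T (δ, v)) + β • (fun j => Complex.I * a j) = 0 := by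
      have h := congrArg (fun z : E => z.2.1) hx
      exact h
    have hx3 : ℓ v = 0 := by
      have h := congrArg (fun z : E => z.2.2) hx
      exact h
    rw [hx1] at hx2
    have hTv : T ((0 : ℝ), v) = H₀ v := by rw [hH₀def]; rfl
    rw [hTv] at hx2
    -- pair with 𝒥a
    have hβ : β = 0 := by
      have h6 : ∑ j, ((cL n (H₀ v)) j * (starRingEnd ℂ) (Complex.I * a j)).re +
          ∑ j, ((β • fun j => Complex.I * a j : Fin n → ℂ) j *
            (starRingEnd ℂ) (Complex.I * a j)).re = 0 := by
        rw [← Finset.sum_add_distrib]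
        have hz : ∀ j : Fin n, (cL n (H₀ v)) j +
            (β • fun j => Complex.I * a j : Fin n → ℂ) j = 0 := fun j => congrFun hx2 j
        have : ∀ j : Fin n, ((cL n (H₀ v)) j * (starRingEnd ℂ) (Complex.I * a j)).re +
            ((β • fun j => Complex.I * a j : Fin n → ℂ) j *
              (starRingEnd ℂ) (Complex.I * a j)).re = 0 := by
          intro j
          rw [← Complex.add_re, ← add_mul, hz j, zero_mul, Complex.zero_re]
        rw [Finset.sum_congr rfl fun j _ => this j, Finset.sum_const, smul_zero]
      rw [hpair (H₀ v) (fun j => Complex.I * a j)] at h6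
      have h7 : H₀ v (fun j => Complex.I * a j) = 0 := by
        rw [hsymm v (fun j => Complex.I * a j), hJa0, ContinuousLinearMap.zero_apply]
      rw [h7, zero_add] at h6
      have h8 : ∑ j, ((β • fun j => Complex.I * a j : Fin n → ℂ) j *
          (starRingEnd ℂ) (Complex.I * a j)).re = β * ∑ j, Complex.normSq (a j) := by
        rw [Finset.mul_sum]
        refine Finset.sum_congr rfl fun j _ => ?_
        rw [Pi.smul_apply, Complex.real_smul, mul_assoc, Complex.mul_conj,
          ← Complex.ofReal_mul, Complex.ofReal_re]
        congr 1
        rw [map_mul, Complex.normSq_I, one_mul]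
      rw [h8] at h6
      exact (mul_eq_zero.mp h6).resolve_right hsum_pos.ne'
    rw [hβ, zero_smul, add_zero] at hx2
    obtain ⟨t, hv⟩ := (hnon v).mp (hcLinj _ hx2)
    have ht : t = 0 := by
      rw [hv, map_smul, smul_eq_mul] at hx3
      exact (mul_eq_zero.mp hx3).resolve_right hℓJa
    rw [ht, zero_smul] at hv
    rw [hx1, hβ, hv]
    rfl
  have hAinj : Function.Injective A := by
    intro x y hxy
    have := hAinj0 (x - y) (by rw [map_sub, hxy, sub_self])
    exact sub_eq_zero.mp this
  have hAsurj : Function.Surjective A :=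
    (LinearMap.injective_iff_surjective (f := ((A : E →L[ℝ] E) : E →ₗ[ℝ] E))).mp hAinj
  -- the local homeomorphism given by the inverse function theorem
  let Aeq : E ≃L[ℝ] E :=
    LinearEquiv.toContinuousLinearEquiv (LinearEquiv.ofBijective (A : E →ₗ[ℝ] E) ⟨hAinj, hAsurj⟩)
  have hAeq : (Aeq : E →L[ℝ] E) = A := by refine ContinuousLinearMap.ext fun x => rfl
  have hGD' : HasFDerivAt G ((Aeq : E ≃L[ℝ] E) : E →L[ℝ] E) x₀ := by rw [hAeq]; exact hGD
  let Ψ := hGC.toOpenPartialHomeomorph G hGD' one_ne_zero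
  have hΨcoe : ⇑Ψ = G := hGC.toOpenPartialHomeomorph_coe hGD' one_ne_zero
  have hx₀mem : x₀ ∈ Ψ.source := hGC.mem_toOpenPartialHomeomorph_source hGD' one_ne_zero
  have hGx₀ : G x₀ = ((0 : ℝ), (0 : (Fin n → ℂ) × ℝ)) := by
    rw [hG]
    refine Prod.ext rfl (Prod.ext ?_ ?_)
    · show (fun j => gradL n m 0 a j + ((0 : ℝ) : ℂ) * (Complex.I * a j)) = 0
      funext j
      rw [congrFun hcrit j]
      simp
    · show ∑ j, ((a j - a j) * (starRingEnd ℂ) (e j)).re = 0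
      simp
  obtain ⟨u₁, W, hu₁o, hWo, h0u₁, haW, hprod⟩ :=
    isOpen_prod_iff.mp Ψ.open_source 0 (a, 0) hx₀mem
  have hopen1 : IsOpen (Ψ.target ∩ Ψ.symm ⁻¹' (u₁ ×ˢ W)) :=
    Ψ.continuousOn_symm.isOpen_inter_preimage Ψ.open_target (hu₁o.prod hWo)
  set SS : Set ℝ := (fun κ : ℝ => (κ, (0 : (Fin n → ℂ) × ℝ))) ⁻¹'
    (Ψ.target ∩ Ψ.symm ⁻¹' (u₁ ×ˢ W)) with hSS
  have hSSopen : IsOpen SS := hopen1.preimage (continuous_id.prodMk continuous_const)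
  have htarget0 : ((0 : ℝ), (0 : (Fin n → ℂ) × ℝ)) ∈ Ψ.target := by
    have h := Ψ.map_source hx₀mem
    rwa [hΨcoe, hGx₀] at h
  have hsymm0 : Ψ.symm ((0 : ℝ), (0 : (Fin n → ℂ) × ℝ)) = x₀ := by
    have h := Ψ.left_inv hx₀mem
    rwa [hΨcoe, hGx₀] at h
  have h0SS : (0 : ℝ) ∈ SS := by
    refine ⟨htarget0, ?_⟩
    rw [Set.mem_preimage, hsymm0]
    exact ⟨h0u₁, haW⟩
  obtain ⟨κ₀, hκ₀pos, hball⟩ := Metric.isOpen_iff.mp hSSopen 0 h0SS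
  have hIooball : Set.Ioo (-κ₀) κ₀ = Metric.ball (0 : ℝ) κ₀ := by
    rw [Real.ball_eq_Ioo, zero_sub, zero_add]
  refine ⟨κ₀, hκ₀pos, W, hWo.mem_nhds haW,
    fun κ => (Ψ.symm (κ, (0 : (Fin n → ℂ) × ℝ))).2, ?_, ?_, ?_⟩
  · rw [hIooball]
    refine continuous_snd.comp_continuousOn ?_
    refine Ψ.continuousOn_symm.comp ((continuous_id.prodMk continuous_const).continuousOn) ?_
    intro κ hκ
    exact (hball hκ).1
  · show (Ψ.symm ((0 : ℝ), (0 : (Fin n → ℂ) × ℝ))).2 = (a, 0)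
    rw [hsymm0]
  · intro κ hκ
    have hκSS : κ ∈ SS := hball (by rwa [Metric.mem_ball, Real.dist_eq, sub_zero])
    obtain ⟨hκt, hκuv⟩ := hκSS
    rw [Set.mem_preimage] at hκuv
    set y := Ψ.symm (κ, (0 : (Fin n → ℂ) × ℝ)) with hy
    have hymem : y ∈ Ψ.source := Ψ.map_target hκt
    have hGy : G y = (κ, (0 : (Fin n → ℂ) × ℝ)) := by
      have h := Ψ.right_inv hκt
      rwa [hΨcoe] at h
    have hy1 : y.1 = κ := congrArg Prod.fst hGy
    have hy2 : Faug n m a e y.1 y.2 = 0 := congrArg Prod.snd hGy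
    refine ⟨hκuv.2, by rwa [hy1] at hy2, ?_⟩
    intro p hp hfp
    have hκu₁ : κ ∈ u₁ := by
      have := hκuv.1
      rwa [hy1] at this
    have hpmem : (κ, p) ∈ Ψ.source := hprod ⟨hκu₁, hp⟩
    have hGp : G (κ, p) = (κ, (0 : (Fin n → ℂ) × ℝ)) := by
      rw [hG]
      exact Prod.ext rfl hfp
    have := Ψ.injOn hpmem hymem (by rw [hΨcoe, hGp, ← hGy])
    exact congrArg Prod.snd this
end

section
/- Let n ≥ 2, let ω = e^{2πi/n}, let r > 0, and set aⱼ = r·ωʲ for j = 0, …, n−1. Then for every j, Σ_{k ≠ j} (aⱼ − a_k)/|aⱼ − a_k|³ = (s₁ / r³)·aⱼ, where s₁ = Σ_{l=1}^{n−1} (1 − ωˡ)/|1 − ωˡ|³. -/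
/-- For the regular `n`-gon configuration `aⱼ = r ωʲ`, the Newtonian
acceleration at each vertex is proportional to the position:
`∑_{k ≠ j} (aⱼ − a_k)/|aⱼ − a_k|³ = (s₁/r³) aⱼ`. -/
theorem polygon_acceleration_proportional
    (n : ℕ) (hn : 2 ≤ n) (r : ℝ) (hr : 0 < r)
    (ω : ℂ) (hω : ω = Complex.exp (2 * Real.pi * Complex.I / n))
    (a : Fin n → ℂ) (ha : ∀ j : Fin n, a j = (r : ℂ) * ω ^ (j : ℕ))
    (s₁ : ℂ) (hs₁ : s₁ = ∑ l ∈ Finset.Ico 1 n, (1 - ω ^ l) / (‖1 - ω ^ l‖ : ℂ) ^ 3) :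
    ∀ j : Fin n,
      ∑ k ∈ Finset.univ.erase j, (a j - a k) / (‖a j - a k‖ : ℂ) ^ 3 =
        (s₁ / (r : ℂ) ^ 3) * a j := by
  haveI : NeZero n := ⟨by omega⟩
  have hn0 : (n : ℂ) ≠ 0 := Nat.cast_ne_zero.mpr (by omega)
  have hr0 : (r : ℂ) ≠ 0 := by exact_mod_cast hr.ne'
  have hωn : ω ^ n = 1 := by
    rw [hω, ← Complex.exp_nat_mul]
    have h : (n : ℂ) * (2 * Real.pi * Complex.I / n) = 2 * Real.pi * Complex.I := by
      field_simp
    rw [h, Complex.exp_two_pi_mul_I]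
  have hmod : ∀ m : ℕ, ω ^ (m % n) = ω ^ m := fun m => by
    conv_rhs => rw [← Nat.div_add_mod m n, pow_add, pow_mul, hωn, one_pow, one_mul]
  have habs : ‖ω‖ = 1 := by
    have h : (2 * (Real.pi : ℂ) * Complex.I / n) = ((2 * Real.pi / n : ℝ) : ℂ) * Complex.I := by
      push_cast; ring
    rw [hω, h, Complex.norm_exp_ofReal_mul_I]
  intro j
  open Fin.NatCast in
  have key : ∑ k ∈ Finset.univ.erase j, (a j - a k) / (‖a j - a k‖ : ℂ) ^ 3
      = ∑ l ∈ Finset.Ico 1 n,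
          (ω ^ (j : ℕ) / (r : ℂ) ^ 2) * ((1 - ω ^ l) / (‖1 - ω ^ l‖ : ℂ) ^ 3) := by
    refine Finset.sum_nbij' (i := fun k => ((k - j : Fin n) : ℕ))
      (j := fun l => j + (l : Fin n)) ?_ ?_ ?_ ?_ ?_
    · intro k hk
      simp only [Finset.mem_erase] at hk
      have : (k - j : Fin n) ≠ 0 := sub_ne_zero.mpr hk.1
      have hv : ((k - j : Fin n) : ℕ) ≠ 0 := fun h => this (Fin.ext h)
      simp only [Finset.mem_Ico]
      exact ⟨Nat.one_le_iff_ne_zero.mpr hv, (k - j : Fin n).isLt⟩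
    · intro l hl
      simp only [Finset.mem_Ico] at hl
      simp only [Finset.mem_erase, Finset.mem_univ, and_true]
      intro h
      have : (l : Fin n) = 0 := by
        have := congrArg (· - j) h
        simpa using this
      have hv : ((l : Fin n) : ℕ) = 0 := by rw [this]; rfl
      rw [Fin.val_cast_of_lt hl.2] at hv
      omega
    · intro k hk
      simp [Fin.cast_val_eq_self]
    · intro l hl
      simp only [Finset.mem_Ico] at hl
      simp [Fin.val_cast_of_lt hl.2]
    · intro k hk
      simp only [Finset.mem_erase] at hk
      set l : ℕ := ((k - j : Fin n) : ℕ) with hl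
      have hkval : ω ^ (k : ℕ) = ω ^ (j : ℕ) * ω ^ l := by
        have h1 : j + (k - j) = k := by abel
        have h2 : (k : ℕ) = ((j : ℕ) + l) % n := by
          rw [← h1]; exact (Fin.add_def _ _ ▸ rfl)
        rw [h2, hmod, pow_add]
      have hdiff : a j - a k = (r : ℂ) * ω ^ (j : ℕ) * (1 - ω ^ l) := by
        rw [ha, ha, hkval]; ring
      have habsd : ‖(r : ℂ) * ω ^ (j : ℕ) * (1 - ω ^ l)‖ = r * ‖1 - ω ^ l‖ := by
        rw [norm_mul, norm_mul, norm_pow, habs, one_pow, mul_one,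
          Complex.norm_real, Real.norm_of_nonneg hr.le]
      beta_reduce
      rw [hdiff, habsd]
      push_cast
      rw [mul_pow, div_mul_div_comm,
        show ((r : ℂ)) ^ 3 * ((‖1 - ω ^ l‖ : ℝ) : ℂ) ^ 3
            = (r : ℂ) * ((r : ℂ) ^ 2 * ((‖1 - ω ^ l‖ : ℝ) : ℂ) ^ 3) from by ring,
        show (r : ℂ) * ω ^ (j : ℕ) * (1 - ω ^ l)
            = (r : ℂ) * (ω ^ (j : ℕ) * (1 - ω ^ l)) from by ring,
        mul_div_mul_left _ _ hr0]
  rw [key, ← Finset.mul_sum, ← hs₁, ha]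
  field_simp
end

section
/- Let n ≥ 2, take n equal masses m₁ = ⋯ = mₙ = 1, let s₁ = (1/4) Σ_{j=1}^{n−1} 1/sin(jπ/n), and set r = (1/2) s₁^{1/3}. Then the regular polygon configuration aⱼ = r·e^{2πij/n}, j = 0, …, n−1, is a central configuration: for every j, 4 aⱼ = (1/2) Σ_{k ≠ j} (aⱼ − a_k)/|aⱼ − a_k|³. -/
open Complex Finset Real Fin.NatCast

lemma cos_in_sin_half (θ : ℝ) : Real.cos θ = 1 - 2 * Real.sin (θ / 2) ^ 2 := by
  have h := Real.cos_two_mul (θ / 2)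
  rw [show 2 * (θ / 2) = θ by ring] at h
  nlinarith [Real.sin_sq_add_cos_sq (θ / 2)]

/-- abs of 1 - e^{iθ}. -/
lemma abs_one_sub_exp (θ : ℝ) :
    ‖1 - Complex.exp (θ * Complex.I)‖ = 2 * |Real.sin (θ / 2)| := by
  have h2 : ‖1 - Complex.exp (θ * Complex.I)‖ ^ 2
      = (2 * |Real.sin (θ / 2)|) ^ 2 := by
    rw [Complex.sq_norm, Complex.normSq_apply]
    simp only [Complex.sub_re, Complex.sub_im, Complex.one_re, Complex.one_im,
      Complex.exp_ofReal_mul_I_re, Complex.exp_ofReal_mul_I_im, mul_pow]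
    have h := Real.sin_sq_add_cos_sq θ
    have hc := cos_in_sin_half θ
    nlinarith [_root_.sq_abs (Real.sin (θ / 2))]
  have ha := norm_nonneg (1 - Complex.exp (θ * Complex.I))
  have hb : (0:ℝ) ≤ 2 * |Real.sin (θ / 2)| := by positivity
  nlinarith

lemma exp_frac_mod (n : ℕ) (hn : 0 < n) (x : ℕ) :
    Complex.exp (2 * Real.pi * Complex.I * ((x % n : ℕ) : ℂ) / n)
      = Complex.exp (2 * Real.pi * Complex.I * (x : ℂ) / n) := by
  have hn' : (n : ℂ) ≠ 0 := by exact_mod_cast hn.ne'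
  have hx : (x : ℂ) = (n : ℂ) * ((x / n : ℕ) : ℂ) + ((x % n : ℕ) : ℂ) := by
    have h0 : n * (x / n) + x % n = x := Nat.div_add_mod x n
    calc (x : ℂ) = ((n * (x / n) + x % n : ℕ) : ℂ) := by rw [h0]
      _ = _ := by push_cast; ring
  have harg : 2 * (Real.pi : ℂ) * Complex.I * (x : ℂ) / n
      = 2 * (Real.pi : ℂ) * Complex.I * ((x % n : ℕ) : ℂ) / n
        + ((x / n : ℕ) : ℂ) * (2 * (Real.pi : ℂ) * Complex.I) := by
    rw [hx]; field_simp; ring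
  rw [harg, Complex.exp_add]
  have h1 : Complex.exp (((x / n : ℕ) : ℂ) * (2 * (Real.pi : ℂ) * Complex.I)) = 1 := by
    have := Complex.exp_int_mul_two_pi_mul_I ((x / n : ℕ) : ℤ)
    simp only [Int.cast_natCast] at this
    exact this
  rw [h1, mul_one]

lemma exp_add_exp_neg (x : ℝ) :
    Complex.exp ((x : ℂ) * Complex.I) + Complex.exp (-((x : ℂ) * Complex.I))
      = 2 * (Real.cos x : ℂ) := by
  rw [show -((x:ℂ) * Complex.I) = ((-x : ℝ) : ℂ) * Complex.I by push_cast; ring,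
    Complex.exp_mul_I, Complex.exp_mul_I, ← Complex.ofReal_cos, ← Complex.ofReal_sin,
    ← Complex.ofReal_cos, ← Complex.ofReal_sin, Real.cos_neg, Real.sin_neg]
  push_cast; ring

lemma exp_frac_reflect (n m : ℕ) (hn : 0 < n) (hm : m ≤ n) :
    Complex.exp (2 * Real.pi * Complex.I * ((n - m : ℕ) : ℂ) / n)
      = Complex.exp (-(2 * Real.pi * Complex.I * (m : ℂ) / n)) := by
  have hn' : (n : ℂ) ≠ 0 := by exact_mod_cast hn.ne'
  have hc : ((n - m : ℕ) : ℂ) = (n : ℂ) - m := by push_cast [hm]; ring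
  have harg : 2 * (Real.pi : ℂ) * Complex.I * ((n - m : ℕ) : ℂ) / n
      = 2 * Real.pi * Complex.I + -(2 * Real.pi * Complex.I * (m : ℂ) / n) := by
    rw [hc]; field_simp; ring
  rw [harg, Complex.exp_add, Complex.exp_two_pi_mul_I, one_mul]

lemma key_sum (n : ℕ) (hn : 2 ≤ n) (F : ℕ → ℂ)
    (hF : ∀ m, F m = (1 - Complex.exp (2 * Real.pi * Complex.I * (m : ℂ) / n)) /
        ((Real.sin (m * Real.pi / n) : ℝ) : ℂ) ^ 3)
    (hsin : ∀ m ∈ Finset.Ico 1 n, 0 < Real.sin (m * Real.pi / n)) :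
    ∑ m ∈ Finset.Ico 1 n, F m
      = ∑ m ∈ Finset.Ico 1 n, 2 / ((Real.sin (m * Real.pi / n) : ℝ) : ℂ) := by
  have hn0 : 0 < n := by omega
  have hnR : (0:ℝ) < n := by exact_mod_cast hn0
  have hrefl : ∑ m ∈ Finset.Ico 1 n, F m = ∑ m ∈ Finset.Ico 1 n, F (n - m) := by
    apply Finset.sum_nbij' (fun m => n - m) (fun m => n - m)
    · intro a ha; rw [Finset.mem_Ico] at *; omega
    · intro a ha; rw [Finset.mem_Ico] at *; omega
    · intro a ha; rw [Finset.mem_Ico] at ha; omega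
    · intro a ha; rw [Finset.mem_Ico] at ha; omega
    · intro a ha; rw [Finset.mem_Ico] at ha
      rw [show n - (n - a) = a by omega]
  have hpt : ∀ m ∈ Finset.Ico 1 n,
      F m + F (n - m) = 4 / ((Real.sin (m * Real.pi / n) : ℝ) : ℂ) := by
    intro m hm
    have hm' := Finset.mem_Ico.mp hm
    have hmn : m ≤ n := by omega
    have hsin' := hsin m hm
    have hs : Real.sin (((n - m : ℕ) : ℝ) * Real.pi / n) = Real.sin (m * Real.pi / n) := by
      rw [Nat.cast_sub hmn,
        show ((n:ℝ) - m) * Real.pi / n = Real.pi - m * Real.pi / n by field_simp,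
        Real.sin_pi_sub]
    rw [hF, hF, hs, exp_frac_reflect n m hn0 hmn]
    have harg : 2 * (Real.pi:ℂ) * Complex.I * (m:ℂ) / n
        = ((2 * Real.pi * m / n : ℝ) : ℂ) * Complex.I := by push_cast; ring
    rw [harg]
    have hee := exp_add_exp_neg (2 * Real.pi * m / n)
    have hreal : 2 - 2 * Real.cos (2 * Real.pi * m / n)
        = 4 * Real.sin (m * Real.pi / n) ^ 2 := by
      have h := cos_in_sin_half (2 * Real.pi * m / n)
      rw [show 2 * Real.pi * (m:ℝ) / n / 2 = m * Real.pi / n by ring] at h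
      linarith
    have hsne : ((Real.sin (m * Real.pi / n) : ℝ) : ℂ) ≠ 0 := by exact_mod_cast hsin'.ne'
    rw [← add_div]
    have hnum : (1 - Complex.exp (((2 * Real.pi * m / n : ℝ) : ℂ) * Complex.I))
        + (1 - Complex.exp (-(((2 * Real.pi * m / n : ℝ) : ℂ) * Complex.I)))
        = ((4 * Real.sin (m * Real.pi / n) ^ 2 : ℝ) : ℂ) := by
      have hc := congrArg (Complex.ofReal) hreal
      push_cast at hee hc ⊢
      linear_combination hc - hee
    rw [hnum, div_eq_div_iff (pow_ne_zero 3 hsne) hsne]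
    push_cast
    ring
  have h2 : (2:ℂ) * ∑ m ∈ Finset.Ico 1 n, F m
      = (2:ℂ) * ∑ m ∈ Finset.Ico 1 n, 2 / ((Real.sin (m * Real.pi / n) : ℝ) : ℂ) := by
    calc (2:ℂ) * ∑ m ∈ Finset.Ico 1 n, F m
        = ∑ m ∈ Finset.Ico 1 n, F m + ∑ m ∈ Finset.Ico 1 n, F (n - m) := by
          rw [← hrefl]; ring
      _ = ∑ m ∈ Finset.Ico 1 n, (F m + F (n - m)) := Finset.sum_add_distrib.symm
      _ = ∑ m ∈ Finset.Ico 1 n, 4 / ((Real.sin (m * Real.pi / n) : ℝ) : ℂ) :=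
          Finset.sum_congr rfl hpt
      _ = _ := by rw [Finset.mul_sum]; exact Finset.sum_congr rfl fun m _ => by ring
  exact mul_left_cancel₀ two_ne_zero h2


/-- The regular polygon of `n` equal unit masses with radius
`r = (1/2) s₁^{1/3}` is a central configuration. -/
theorem polygon_is_central_configuration
    (n : ℕ) (hn : 2 ≤ n)
    (s₁ : ℝ) (hs₁ : s₁ = (1 / 4) * ∑ j ∈ Finset.Ico 1 n, 1 / Real.sin (j * Real.pi / n))
    (r : ℝ) (hr : r = (1 / 2) * s₁ ^ ((1 : ℝ) / 3))
    (a : Fin n → ℂ)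
    (ha : ∀ j : Fin n, a j = (r : ℂ) * Complex.exp (2 * Real.pi * Complex.I * (j : ℕ) / n)) :
    ∀ j : Fin n,
      4 * a j = (1 / 2) *
        ∑ k ∈ Finset.univ.erase j, (a j - a k) / (‖a j - a k‖ : ℂ) ^ 3 := by
  intro j
  have hn0 : 0 < n := by omega
  haveI : NeZero n := ⟨by omega⟩
  have hnR : (0:ℝ) < n := by exact_mod_cast hn0
  have hsin : ∀ m ∈ Finset.Ico 1 n, 0 < Real.sin (m * Real.pi / n) := by
    intro m hm; rw [Finset.mem_Ico] at hm
    have h1 : (0:ℝ) < m := by exact_mod_cast hm.1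
    have h2 : (m:ℝ) < n := by exact_mod_cast hm.2
    apply Real.sin_pos_of_pos_of_lt_pi
    · positivity
    · rw [div_lt_iff₀ hnR]; nlinarith [Real.pi_pos]
  have hs1pos : 0 < s₁ := by
    rw [hs₁]
    have hpos : 0 < ∑ m ∈ Finset.Ico 1 n, 1 / Real.sin (m * Real.pi / n) := by
      apply Finset.sum_pos
      · intro m hm; have := hsin m hm; positivity
      · exact ⟨1, Finset.mem_Ico.mpr ⟨le_refl 1, by omega⟩⟩
    linarith
  have hrpos : 0 < r := by
    rw [hr]
    have h := Real.rpow_pos_of_pos hs1pos ((1:ℝ)/3)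
    linarith
  have hrne : (r:ℂ) ≠ 0 := by exact_mod_cast hrpos.ne'
  have hr3 : r ^ 3 = s₁ / 8 := by
    rw [hr, mul_pow]
    have h3 : (s₁ ^ ((1:ℝ)/3)) ^ (3:ℕ) = s₁ := by
      rw [← Real.rpow_natCast (s₁ ^ ((1:ℝ)/3)) 3, ← Real.rpow_mul hs1pos.le]
      norm_num
    rw [h3]; ring
  have hEabs : ∀ t : ℕ,
      ‖Complex.exp (2 * Real.pi * Complex.I * (t:ℂ) / n)‖ = 1 := by
    intro t
    rw [show 2*(Real.pi:ℂ)*Complex.I*(t:ℂ)/n = ((2*Real.pi*t/n : ℝ):ℂ) * Complex.I by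
      push_cast; ring]
    exact Complex.norm_exp_ofReal_mul_I _
  have hdiff : ∀ m ∈ Finset.Ico 1 n,
      a j - a (j + (m : Fin n)) = (r:ℂ) * Complex.exp (2 * Real.pi * Complex.I * ((j:ℕ):ℂ) / n)
        * (1 - Complex.exp (2 * Real.pi * Complex.I * (m:ℂ) / n)) := by
    intro m hm
    have hm' := Finset.mem_Ico.mp hm
    have hval : ((j + (m : Fin n) : Fin n) : ℕ) = (j.val + m) % n := by
      rw [Fin.val_add, Fin.val_natCast, Nat.add_mod_mod]
    rw [ha, ha, hval, exp_frac_mod n hn0 (j.val + m),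
      show 2*(Real.pi:ℂ)*Complex.I*((j.val + m : ℕ):ℂ)/n
        = 2*Real.pi*Complex.I*((j:ℕ):ℂ)/n + 2*Real.pi*Complex.I*(m:ℂ)/n by
        have hnC : (n:ℂ) ≠ 0 := by exact_mod_cast hn0.ne'
        push_cast
        field_simp,
      Complex.exp_add]
    ring
  have habs : ∀ m ∈ Finset.Ico 1 n,
      ‖a j - a (j + (m : Fin n))‖ = r * (2 * Real.sin (m * Real.pi / n)) := by
    intro m hm
    rw [hdiff m hm, norm_mul, norm_mul, Complex.norm_real, Real.norm_eq_abs, abs_of_pos hrpos, hEabs,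
      show 2*(Real.pi:ℂ)*Complex.I*(m:ℂ)/n = ((2*Real.pi*m/n : ℝ):ℂ) * Complex.I by
        push_cast; ring,
      abs_one_sub_exp, show (2*Real.pi*(m:ℝ)/n)/2 = (m:ℝ) * Real.pi / n by ring,
      abs_of_pos (hsin m hm)]
    ring
  have hterm : ∀ m ∈ Finset.Ico 1 n,
      (a j - a (j + (m : Fin n))) / ((‖a j - a (j + (m : Fin n))‖ : ℝ) : ℂ) ^ 3
      = (Complex.exp (2 * Real.pi * Complex.I * ((j:ℕ):ℂ) / n) / (8 * (r:ℂ)^2)) *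
        ((1 - Complex.exp (2 * Real.pi * Complex.I * (m:ℂ) / n)) /
          ((Real.sin (m * Real.pi / n) : ℝ) : ℂ)^3) := by
    intro m hm
    rw [habs m hm, hdiff m hm]
    have hsne : ((Real.sin (m * Real.pi / n):ℝ):ℂ) ≠ 0 := by
      exact_mod_cast (hsin m hm).ne'
    rw [show ((r * (2 * Real.sin (m * Real.pi / n)) : ℝ) : ℂ) ^ 3
        = (r:ℂ)^3 * 8 * ((Real.sin (m * Real.pi / n) : ℝ) : ℂ)^3 by push_cast; ring]
    have hd1 : (r:ℂ)^3 * 8 * ((Real.sin (m * Real.pi / n) : ℝ) : ℂ)^3 ≠ 0 := by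
      exact mul_ne_zero (mul_ne_zero (pow_ne_zero 3 hrne) (by norm_num)) (pow_ne_zero 3 hsne)
    have hd2 : 8 * (r:ℂ)^2 * ((Real.sin (m * Real.pi / n) : ℝ) : ℂ)^3 ≠ 0 := by
      exact mul_ne_zero (mul_ne_zero (by norm_num) (pow_ne_zero 2 hrne)) (pow_ne_zero 3 hsne)
    rw [div_mul_div_comm, div_eq_div_iff hd1 hd2]
    ring
  have hsum : ∑ k ∈ Finset.univ.erase j, (a j - a k) / (‖a j - a k‖ : ℂ) ^ 3
      = ∑ m ∈ Finset.Ico 1 n,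
        (a j - a (j + (m : Fin n))) / (‖a j - a (j + (m : Fin n))‖ : ℂ) ^ 3 := by
    apply Finset.sum_nbij' (fun k => ((k - j : Fin n) : ℕ)) (fun m => j + (m : Fin n))
    · intro k hk
      rw [Finset.mem_erase] at hk
      rw [Finset.mem_Ico]
      constructor
      · by_contra h
        have h0 : ((k - j : Fin n) : ℕ) = 0 := by omega
        have : k - j = 0 := by
          apply Fin.ext; simpa using h0
        exact hk.1 (by rwa [sub_eq_zero] at this)
      · exact (k - j).isLt
    · intro m hm
      rw [Finset.mem_Ico] at hm
      rw [Finset.mem_erase]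
      refine ⟨?_, Finset.mem_univ _⟩
      intro h
      have h0 : (m : Fin n) = 0 := by
        have := congrArg (fun x => x - j) h
        simpa [add_sub_cancel_left] using this
      have := congrArg Fin.val h0
      rw [Fin.val_natCast, Fin.val_zero, Nat.mod_eq_of_lt hm.2] at this
      omega
    · intro k hk
      rw [Fin.cast_val_eq_self]
      abel
    · intro m hm
      rw [Finset.mem_Ico] at hm
      rw [show j + (m : Fin n) - j = (m : Fin n) by abel, Fin.val_natCast]
      exact Nat.mod_eq_of_lt hm.2
    · intro k hk
      rw [Fin.cast_val_eq_self, show j + (k - j) = k by abel]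
  rw [hsum, Finset.sum_congr rfl hterm, ← Finset.mul_sum,
    key_sum n hn _ (fun m => rfl) hsin]
  have hsum2 : ∑ m ∈ Finset.Ico 1 n, (2:ℂ) / ((Real.sin (m * Real.pi / n) : ℝ) : ℂ)
      = 8 * (s₁ : ℂ) := by
    have hc : ((∑ m ∈ Finset.Ico 1 n, 1 / Real.sin (m * Real.pi / n) : ℝ) : ℂ)
        = ∑ m ∈ Finset.Ico 1 n, 1 / ((Real.sin (m * Real.pi / n) : ℝ) : ℂ) := by
      push_cast; rfl
    calc ∑ m ∈ Finset.Ico 1 n, (2:ℂ) / ((Real.sin (m * Real.pi / n) : ℝ) : ℂ)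
        = ∑ m ∈ Finset.Ico 1 n, 2 * (1 / ((Real.sin (m * Real.pi / n) : ℝ) : ℂ)) :=
          Finset.sum_congr rfl fun m _ => by ring
      _ = 2 * ∑ m ∈ Finset.Ico 1 n, 1 / ((Real.sin (m * Real.pi / n) : ℝ) : ℂ) :=
          (Finset.mul_sum _ _ _).symm
      _ = 8 * (s₁ : ℂ) := by rw [← hc, hs₁]; push_cast; ring
  rw [hsum2, ha j]
  have hr3C : (r:ℂ)^3 = (s₁:ℂ)/8 := by exact_mod_cast congrArg Complex.ofReal hr3
  field_simp
  linear_combination 8 * hr3C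
end
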